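/- arXiv:2001.02116 — 5 statements merged into one kernel-verified Lean document; each statement's English description precedes it below -/
import Mathlib

section
/- Let Σ be a d×d sign pattern and let 𝒬(Σ) = {M ∈ ℝ^{d×d} : sgn(M_{ij}) = sgn(Σ_{ij}) for all i,j} be its qualitative class, where the off-diagonal signs are nonnegative (so all M in 𝒬(Σ) are Metzler). Then every matrix in 𝒬(Σ) is Hurwitz stable if and only if the sign matrix sgn(Σ) ∈ {−1,0,1}^{d×d} is Hurwitz stable. -/
open Matrix Filter Topology
open scoped ENNReal NNReal Pointwise

/-- A square real matrix is Metzler if all its off-diagonal entries are nonnegative. -/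
def IsMetzler {d : ℕ} (M : Matrix (Fin d) (Fin d) ℝ) : Prop :=
  ∀ i j, i ≠ j → 0 ≤ M i j

/-- A square real matrix is Hurwitz stable if every (complex) eigenvalue has
negative real part. -/
def IsHurwitz {d : ℕ} (M : Matrix (Fin d) (Fin d) ℝ) : Prop :=
  ∀ z ∈ spectrum ℂ (M.map (Complex.ofReal)), z.re < 0

attribute [local instance] Matrix.frobeniusSeminormedAddCommGroup
  Matrix.frobeniusNormedAddCommGroup Matrix.frobeniusNormedSpace
  Matrix.frobeniusNormedRing Matrix.frobeniusNormedAlgebra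

lemma entry_le_frob {d : ℕ} (A : Matrix (Fin d) (Fin d) ℝ) (i j : Fin d) :
    A i j ≤ ‖A‖ := by
  have h1 : |A i j| ≤ ‖A‖ := by
    rw [Matrix.frobenius_norm_def]
    have h2 : |A i j| = (‖A i j‖ ^ (2:ℝ)) ^ (1/2 : ℝ) := by
      rw [← Real.rpow_mul (norm_nonneg _)]
      norm_num [Real.norm_eq_abs]
    rw [h2]
    apply Real.rpow_le_rpow (by positivity) _ (by norm_num)
    calc ‖A i j‖ ^ (2:ℝ) ≤ ∑ j', ‖A i j'‖ ^ (2:ℝ) := by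
          apply Finset.single_le_sum (fun _ _ => by positivity) (Finset.mem_univ j)
      _ ≤ ∑ i', ∑ j', ‖A i' j'‖ ^ (2:ℝ) := by
          apply Finset.single_le_sum (fun _ _ => by positivity) (Finset.mem_univ i)
  exact (le_abs_self _).trans h1

lemma frob_norm_map_pow {d : ℕ} (B : Matrix (Fin d) (Fin d) ℝ) (m : ℕ) :
    ‖(B.map Complex.ofReal) ^ m‖ = ‖B ^ m‖ := by
  have h : (B.map Complex.ofReal) ^ m = (B ^ m).map Complex.ofReal := by
    have : ∀ C : Matrix (Fin d) (Fin d) ℝ, C.map Complex.ofReal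
        = Complex.ofRealHom.mapMatrix C := fun _ => rfl
    rw [this, this, map_pow]
  rw [h]
  exact Matrix.frobenius_norm_map_eq _ _ (fun a => Complex.norm_real a)

lemma keyA {d : ℕ} (S : Matrix (Fin d) (Fin d) ℝ) (hm : ∀ i j, i ≠ j → 0 ≤ S i j)
    (v : Fin d → ℝ) (hv0 : ∀ i, 0 ≤ v i) (i₀ : Fin d) (hv1 : 0 < v i₀)
    (hSv : ∀ i, 0 ≤ S.mulVec v i) (c : ℝ) (hc1 : 1 ≤ c) (hcd : ∀ i, 0 ≤ S i i + c) :
    ∃ z ∈ spectrum ℂ (S.map Complex.ofReal), 0 ≤ 2*c*z.re + ‖z‖^2 := by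
  classical
  have hc0 : (0:ℝ) < c := lt_of_lt_of_le one_pos hc1
  set B : Matrix (Fin d) (Fin d) ℝ := S + c • (1 : Matrix (Fin d) (Fin d) ℝ) with hBdef
  have hB0 : ∀ i j, 0 ≤ B i j := by
    intro i j
    by_cases h : i = j
    · subst h
      simpa [hBdef, Matrix.one_apply] using hcd i
    · simpa [hBdef, Matrix.one_apply, h] using hm i j h
  have hBv : ∀ i, c * v i ≤ B.mulVec v i := by
    intro i
    have : B.mulVec v = S.mulVec v + c • v := by
      simp [hBdef, Matrix.add_mulVec, Matrix.smul_mulVec]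
    rw [this]
    have := hSv i
    simp only [Pi.add_apply, Pi.smul_apply, smul_eq_mul]
    linarith
  -- powers
  have hpow : ∀ m : ℕ, (∀ i j, 0 ≤ (B ^ m) i j) ∧ (∀ i, c ^ m * v i ≤ ((B ^ m).mulVec v) i) := by
    intro m
    induction m with
    | zero =>
      constructor
      · intro i j
        by_cases h : i = j <;> simp [Matrix.one_apply, h]
      · intro i; simp [Matrix.one_mulVec]
    | succ m ih =>
      have hBm := ih.1
      have hBmv := ih.2
      have hsucc : B ^ (m+1) = B * B ^ m := by rw [pow_succ']
      constructor
      · intro i j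
        rw [hsucc]
        rw [Matrix.mul_apply]
        exact Finset.sum_nonneg fun l _ => mul_nonneg (hB0 i l) (hBm l j)
      · intro i
        rw [hsucc, ← Matrix.mulVec_mulVec]
        have h1 : ∀ j, c ^ m * v j ≤ ((B ^ m).mulVec v) j := hBmv
        calc c ^ (m+1) * v i = c ^ m * (c * v i) := by ring
          _ ≤ c ^ m * (B.mulVec v i) := by
              apply mul_le_mul_of_nonneg_left (hBv i) (by positivity)
          _ = ∑ j, B i j * (c ^ m * v j) := by
              rw [Matrix.mulVec, dotProduct, Finset.mul_sum]; congr 1; ext j; ring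
          _ ≤ ∑ j, B i j * ((B ^ m).mulVec v) j := by
              apply Finset.sum_le_sum
              intro j _
              exact mul_le_mul_of_nonneg_left (h1 j) (hB0 i j)
          _ = (B.mulVec ((B ^ m).mulVec v)) i := rfl
  -- entry lower bound
  set Vb : ℝ := ∑ j, v j with hVb
  have hVb0 : 0 < Vb := lt_of_lt_of_le hv1 (Finset.single_le_sum (fun j _ => hv0 j) (Finset.mem_univ i₀))
  have hvle : ∀ j, v j ≤ Vb := fun j => Finset.single_le_sum (fun l _ => hv0 l) (Finset.mem_univ j)
  set K : ℝ := v i₀ / (d * Vb) with hK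
  have hd0 : (0:ℝ) < d := by
    have : (0:ℕ) < d := Fin.pos i₀
    exact_mod_cast this
  have hK0 : 0 < K := div_pos hv1 (by positivity)
  have hnorm : ∀ m : ℕ, K * c ^ m ≤ ‖B ^ m‖ := by
    intro m
    obtain ⟨j, -, hj⟩ := Finset.exists_max_image Finset.univ
      (fun j => (B ^ m) i₀ j * v j) ⟨i₀, Finset.mem_univ i₀⟩
    have hsum : c ^ m * v i₀ ≤ ∑ l, (B ^ m) i₀ l * v l := (hpow m).2 i₀
    have hsum2 : ∑ l, (B ^ m) i₀ l * v l ≤ d * ((B ^ m) i₀ j * v j) := by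
      calc ∑ l, (B ^ m) i₀ l * v l ≤ ∑ _l : Fin d, (B ^ m) i₀ j * v j :=
            Finset.sum_le_sum (fun l _ => hj l (Finset.mem_univ l))
        _ = d * ((B ^ m) i₀ j * v j) := by
            rw [Finset.sum_const, Finset.card_univ, Fintype.card_fin, nsmul_eq_mul]
    have hjv : c ^ m * v i₀ / d ≤ (B ^ m) i₀ j * v j := by
      rw [div_le_iff₀ hd0]; linarith
    have hBj : K * c ^ m ≤ (B ^ m) i₀ j := by
      have hb : (B ^ m) i₀ j * v j ≤ (B ^ m) i₀ j * Vb :=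
        mul_le_mul_of_nonneg_left (hvle j) ((hpow m).1 i₀ j)
      rw [hK]
      rw [div_mul_eq_mul_div, div_le_iff₀ (by positivity)]
      calc v i₀ * c ^ m = (c ^ m * v i₀ / d) * d := by
            field_simp
        _ ≤ ((B ^ m) i₀ j * v j) * d := by
            apply mul_le_mul_of_nonneg_right hjv (le_of_lt hd0)
        _ ≤ ((B ^ m) i₀ j * Vb) * d := by
            apply mul_le_mul_of_nonneg_right hb (le_of_lt hd0)
        _ = (B ^ m) i₀ j * (↑d * Vb) := by ring
    exact hBj.trans (entry_le_frob _ i₀ j)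
  -- Gelfand's formula
  set T : Matrix (Fin d) (Fin d) ℂ := S.map Complex.ofReal + (c:ℂ) • 1 with hT
  have hTB : T = B.map Complex.ofReal := by
    ext i j
    by_cases h : i = j <;>
      simp [hT, hBdef, Matrix.map_apply, Matrix.one_apply, h]
  have hTm : ∀ m : ℕ, K * c ^ m ≤ ‖T ^ m‖ := by
    intro m
    rw [hTB, frob_norm_map_pow]
    exact hnorm m
  have hgel := spectrum.pow_norm_pow_one_div_tendsto_nhds_spectralRadius T
  have hglb : ∀ᶠ m : ℕ in atTop,
      ENNReal.ofReal (K ^ (1/(m:ℝ)) * c) ≤ ENNReal.ofReal (‖T ^ m‖ ^ (1/(m:ℝ))) := by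
    filter_upwards [eventually_ge_atTop 1] with m hm
    apply ENNReal.ofReal_le_ofReal
    have hm0 : (m:ℝ) ≠ 0 := by positivity
    have h1 : K ^ (1/(m:ℝ)) * c = (K * c ^ m) ^ (1/(m:ℝ)) := by
      rw [Real.mul_rpow hK0.le (pow_nonneg hc0.le m)]
      congr 1
      rw [← Real.rpow_natCast c m, ← Real.rpow_mul hc0.le]
      rw [mul_one_div, div_self hm0, Real.rpow_one]
    rw [h1]
    exact Real.rpow_le_rpow (by positivity) (hTm m) (by positivity)
  have htb : Tendsto (fun m : ℕ => ENNReal.ofReal (K ^ (1/(m:ℝ)) * c)) atTop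
      (𝓝 (ENNReal.ofReal c)) := by
    apply (ENNReal.continuous_ofReal.tendsto c).comp
    have h2 : Tendsto (fun m : ℕ => K ^ (1/(m:ℝ))) atTop (𝓝 1) := by
      have h3 : Tendsto (fun m : ℕ => Real.log K * (1/(m:ℝ))) atTop (𝓝 0) := by
        simpa using (tendsto_one_div_atTop_nhds_zero_nat).const_mul (Real.log K)
      have h4 := (Real.continuous_exp.continuousAt (x := (0:ℝ))).tendsto.comp h3
      simp only [Real.exp_zero] at h4
      convert h4 using 2 with m
      rw [Function.comp_apply, Real.rpow_def_of_pos hK0]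
    simpa using h2.mul_const c
  have hρc : ENNReal.ofReal c ≤ spectralRadius ℂ T :=
    le_of_tendsto_of_tendsto htb hgel hglb
  -- extract eigenvalue of maximal modulus
  have hfinT : (spectrum ℂ T).Finite := Matrix.finite_spectrum T
  have hρ : spectralRadius ℂ T = sSup ((fun z : ℂ => (‖z‖₊ : ℝ≥0∞)) '' spectrum ℂ T) := by
    rw [spectralRadius, sSup_image]
  have hne : (spectrum ℂ T).Nonempty := by
    by_contra h
    rw [Set.not_nonempty_iff_eq_empty] at h
    have hpos : 0 < ENNReal.ofReal c := ENNReal.ofReal_pos.2 hc0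
    rw [hρ, h] at hρc
    simp only [Set.image_empty, sSup_empty, le_bot_iff] at hρc
    rw [hρc] at hpos
    simp at hpos
  obtain ⟨w, hw, hweq⟩ : ∃ w ∈ spectrum ℂ T, (‖w‖₊ : ℝ≥0∞) = spectralRadius ℂ T := by
    have hmem : sSup ((fun z : ℂ => (‖z‖₊ : ℝ≥0∞)) '' spectrum ℂ T)
        ∈ (fun z : ℂ => (‖z‖₊ : ℝ≥0∞)) '' spectrum ℂ T :=
      Set.Nonempty.csSup_mem (Set.Nonempty.image _ hne) (Set.Finite.image _ hfinT)
    obtain ⟨w, hw, hweq⟩ := hmem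
    exact ⟨w, hw, by rw [hρ]; exact hweq⟩
  have hcw : c ≤ ‖w‖ := by
    rw [← hweq] at hρc
    rwa [← show ENNReal.ofReal ‖w‖ = (‖w‖₊ : ℝ≥0∞) by exact ENNReal.ofReal_eq_coe_nnreal (norm_nonneg w), ENNReal.ofReal_le_ofReal_iff (norm_nonneg _)] at hρc
  -- spectrum shift
  have hshift : spectrum ℂ T = ({(c:ℂ)} : Set ℂ) + spectrum ℂ (S.map Complex.ofReal) := by
    rw [spectrum.singleton_add_eq, hT, Algebra.algebraMap_eq_smul_one, add_comm]
  rw [hshift] at hw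
  rw [Set.mem_add] at hw
  obtain ⟨x, hx, z, hz, hxz⟩ := hw
  rw [Set.mem_singleton_iff] at hx
  subst hx
  refine ⟨z, hz, ?_⟩
  have hw2 : c^2 ≤ ‖(c:ℂ) + z‖^2 := by
    rw [hxz]
    nlinarith [norm_nonneg w, hcw]
  have hwre : ‖(c:ℂ) + z‖^2 = (c + z.re)^2 + z.im^2 := by
    rw [Complex.sq_norm, Complex.normSq_apply]
    simp [Complex.add_re, Complex.add_im, Complex.ofReal_re, Complex.ofReal_im]
    ring
  have hzn : ‖z‖^2 = z.re^2 + z.im^2 := by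
    rw [Complex.sq_norm, Complex.normSq_apply]
    ring
  rw [hzn]
  nlinarith [hw2, hwre]

lemma key {d : ℕ} (S : Matrix (Fin d) (Fin d) ℝ) (hm : ∀ i j, i ≠ j → 0 ≤ S i j)
    (v : Fin d → ℝ) (hv0 : ∀ i, 0 ≤ v i) (i₀ : Fin d) (hv1 : 0 < v i₀)
    (hSv : ∀ i, 0 ≤ S.mulVec v i) :
    ∃ z ∈ spectrum ℂ (S.map Complex.ofReal), 0 ≤ z.re := by
  classical
  set c₁ : ℝ := 1 + ∑ i, |S i i| with hc₁
  have hsum0 : 0 ≤ ∑ i, |S i i| := Finset.sum_nonneg fun i _ => abs_nonneg _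
  have hc₁1 : 1 ≤ c₁ := by simp only [hc₁]; linarith
  have hc₁d : ∀ c : ℝ, c₁ ≤ c → ∀ i, 0 ≤ S i i + c := by
    intro c hc i
    have h1 : |S i i| ≤ ∑ j, |S j j| :=
      Finset.single_le_sum (fun j _ => abs_nonneg (S j j)) (Finset.mem_univ i)
    have h2 : -S i i ≤ |S i i| := neg_le_abs _
    simp only [hc₁] at hc
    linarith
  have hAc : ∀ c : ℝ, c₁ ≤ c → ∃ z ∈ spectrum ℂ (S.map Complex.ofReal),
      0 ≤ 2*c*z.re + ‖z‖^2 :=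
    fun c hc => keyA S hm v hv0 i₀ hv1 hSv c (hc₁1.trans hc) (hc₁d c hc)
  have hfin : (spectrum ℂ (S.map Complex.ofReal)).Finite := Matrix.finite_spectrum _
  obtain ⟨z₀, hz₀, -⟩ := hAc c₁ le_rfl
  have hEne : hfin.toFinset.Nonempty := ⟨z₀, hfin.mem_toFinset.2 hz₀⟩
  obtain ⟨μz, hμz, hμmax⟩ := Finset.exists_max_image hfin.toFinset (fun z => z.re) hEne
  obtain ⟨qz, hqz, hqmax⟩ := Finset.exists_max_image hfin.toFinset (fun z => ‖z‖^2) hEne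
  refine ⟨μz, hfin.mem_toFinset.1 hμz, ?_⟩
  by_contra hneg
  push_neg at hneg
  set Q : ℝ := ‖qz‖^2 with hQdef
  have hQ0 : 0 ≤ Q := by positivity
  set c : ℝ := max c₁ ((Q+1)/(2*(-μz.re))) with hcdef
  obtain ⟨z, hz, hzin⟩ := hAc c (le_max_left _ _)
  have h1 : z.re ≤ μz.re := hμmax z (hfin.mem_toFinset.2 hz)
  have h2 : ‖z‖^2 ≤ Q := hqmax z (hfin.mem_toFinset.2 hz)
  have hc0 : (0:ℝ) < c := lt_of_lt_of_le one_pos (hc₁1.trans (le_max_left _ _))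
  have h3 : (Q+1)/(2*(-μz.re)) ≤ c := le_max_right _ _
  rw [div_le_iff₀ (by linarith)] at h3
  have h4 : 2*c*z.re ≤ 2*c*μz.re := by nlinarith
  nlinarith [hzin]


lemma det_eq_prod_diag {d : ℕ} (A : Matrix (Fin d) (Fin d) ℂ)
    (h : ∀ σ : Equiv.Perm (Fin d), σ ≠ 1 → ∃ i, A (σ i) i = 0) :
    A.det = ∏ i, A i i := by
  rw [Matrix.det_apply]
  rw [Finset.sum_eq_single (1 : Equiv.Perm (Fin d))]
  · simp
  · intro σ _ hσ
    obtain ⟨i, hi⟩ := h σ hσ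
    have hz : ∏ i, A (σ i) i = 0 := Finset.prod_eq_zero (Finset.mem_univ i) hi
    rw [hz, smul_zero]
  · intro h1; exact absurd (Finset.mem_univ _) h1

lemma perm_orbit {d : ℕ} (σ : Equiv.Perm (Fin d)) (hσ : σ ≠ 1) :
    ∃ (k : ℕ) (f : ℕ → Fin d), 0 < k ∧ f k = f 0 ∧ (∀ j, f (j+1) = σ (f j)) ∧
      (∀ j, f j ≠ f (j+1)) := by
  have hex : ∃ x, σ x ≠ x := by
    by_contra h
    push_neg at h
    exact hσ (Equiv.ext h)
  obtain ⟨i₀, hi₀⟩ := hex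
  refine ⟨orderOf σ, fun j => (σ ^ j) i₀, orderOf_pos σ, ?_, ?_, ?_⟩
  · show (σ ^ orderOf σ) i₀ = (σ ^ 0) i₀
    rw [pow_orderOf_eq_one σ]
    rfl
  · intro j
    show (σ ^ (j+1)) i₀ = σ ((σ ^ j) i₀)
    rw [pow_succ']
    rfl
  · intro j h
    apply hi₀
    have h' : (σ ^ j) i₀ = (σ ^ (j+1)) i₀ := h
    rw [pow_succ, Equiv.Perm.mul_apply] at h'
    exact ((σ ^ j).injective h').symm

lemma sign_cast (s : SignType) : SignType.sign (((s : ℤ) : ℝ)) = s := by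
  cases s
  · simp
  · have h1 : ((SignType.neg : ℤ) : ℝ) = -1 := by norm_num
    rw [h1, show (SignType.neg = -1) from rfl, sign_eq_neg_one_iff]
    norm_num
  · have h1 : ((SignType.pos : ℤ) : ℝ) = 1 := by norm_num
    rw [h1, show (SignType.pos = 1) from rfl, sign_eq_one_iff]
    norm_num

theorem sign_stability_iff_sign_matrix_hurwitz {d : ℕ}
    (P : Matrix (Fin d) (Fin d) ℝ) (hP : ∀ i j, i ≠ j → 0 ≤ P i j) :
    (∀ M : Matrix (Fin d) (Fin d) ℝ,
        (∀ i j, SignType.sign (M i j) = SignType.sign (P i j)) → IsHurwitz M) ↔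
      IsHurwitz (Matrix.of fun i j => ((SignType.sign (P i j) : ℤ) : ℝ)) := by
  classical
  set Sm : Matrix (Fin d) (Fin d) ℝ :=
    Matrix.of fun i j => ((SignType.sign (P i j) : ℤ) : ℝ) with hSm
  have hSm_apply : ∀ i j, Sm i j = ((SignType.sign (P i j) : ℤ) : ℝ) := fun i j => rfl
  constructor
  · intro h
    exact h Sm (fun i j => by rw [hSm_apply]; exact sign_cast _)
  · intro hH M hsign
    have htri : ∀ a b, Sm a b = -1 ∨ Sm a b = 0 ∨ Sm a b = 1 := by
      intro a b
      rw [hSm_apply]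
      cases SignType.sign (P a b)
      · right; left; norm_num
      · left; norm_num
      · right; right; norm_num
    have hSoff : ∀ i j, i ≠ j → 0 ≤ Sm i j := by
      intro i j hij
      rw [hSm_apply]
      cases hs : SignType.sign (P i j)
      · norm_num
      · have := sign_eq_neg_one_iff.1 (by rw [hs]; rfl)
        exact absurd (hP i j hij) (by linarith)
      · norm_num
    have hpos_iff : ∀ a b, 0 < M a b ↔ 0 < Sm a b := by
      intro a b
      rw [← sign_eq_one_iff, hsign a b, hSm_apply]
      cases hs : SignType.sign (P a b)
      · constructor
        · intro hx; exact absurd hx (by decide)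
        · intro hx; norm_num at hx
      · constructor
        · intro hx; exact absurd hx (by decide)
        · intro hx; norm_num at hx
      · constructor
        · intro hx; norm_num
        · intro hx; rfl
    -- diagonal signs are all negative
    have hdiagP : ∀ i, SignType.sign (P i i) = -1 := by
      intro i
      by_contra hne
      have hge : 0 ≤ Sm i i := by
        rw [hSm_apply]
        cases hs : SignType.sign (P i i)
        · norm_num
        · exact absurd (by rw [hs]; rfl) hne
        · norm_num
      obtain ⟨z, hz, hz0⟩ := key Sm hSoff (fun l => if l = i then 1 else 0)
        (fun l => by by_cases h : l = i <;> simp [h]) i (by simp)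
        (by
          intro l
          have hmv : Sm.mulVec (fun l => if l = i then (1:ℝ) else 0) l = Sm l i := by
            simp [Matrix.mulVec, dotProduct, mul_ite, mul_one, mul_zero]
          rw [hmv]
          by_cases hl : l = i
          · subst hl; exact hge
          · exact hSoff l i hl)
      exact absurd (hH z hz) (not_lt.2 hz0)
    have hSdiag : ∀ i, Sm i i = -1 := by
      intro i; rw [hSm_apply, hdiagP i]; norm_num
    -- no positive cycles
    have hnocycleM : ∀ (k : ℕ) (f : ℕ → Fin d), 0 < k → f k = f 0 →
        (∀ j, f j ≠ f (j+1)) → ∃ j, j < k ∧ ¬(0 < M (f (j+1)) (f j)) := by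
      intro k f hk hfk hfne
      by_contra hcon
      push_neg at hcon
      set V := (Finset.range k).image f with hV
      set v : Fin d → ℝ := fun l => if l ∈ V then 1 else 0 with hv
      have hv0 : ∀ l, 0 ≤ v l := fun l => by by_cases h : l ∈ V <;> simp [hv, h]
      have hf0 : f 0 ∈ V := Finset.mem_image.2 ⟨0, Finset.mem_range.2 hk, rfl⟩
      have hSv : ∀ l, 0 ≤ Sm.mulVec v l := by
        intro l
        have hmv : Sm.mulVec v l = ∑ m, Sm l m * v m := rfl
        by_cases hl : l ∈ V
        · obtain ⟨j, hjr, hjf⟩ := Finset.mem_image.1 hl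
          rw [Finset.mem_range] at hjr
          obtain ⟨j₂, hj₂k, hj₂⟩ : ∃ j₂, j₂ < k ∧ f (j₂ + 1) = l := by
            rcases Nat.eq_zero_or_pos j with hj0 | hjpos
            · refine ⟨k - 1, Nat.sub_lt hk one_pos, ?_⟩
              rw [Nat.sub_add_cancel (Nat.one_le_of_lt (Nat.lt_of_lt_of_le hk (le_refl k)))]
              · rw [hfk, ← hjf, hj0]
            · exact ⟨j - 1, lt_of_le_of_lt (Nat.sub_le j 1) hjr,
                by rw [Nat.sub_add_cancel hjpos, hjf]⟩
          have hedge : 0 < M l (f j₂) := by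
            have := hcon j₂ hj₂k
            rwa [hj₂] at this
          have hedgeS : 0 < Sm l (f j₂) := (hpos_iff _ _).1 hedge
          have hSm1 : Sm l (f j₂) = 1 := by
            rcases htri l (f j₂) with h | h | h
            · linarith
            · linarith
            · exact h
          have hne2 : f j₂ ≠ l := by rw [← hj₂]; exact hfne j₂
          have hfj₂V : f j₂ ∈ V := Finset.mem_image.2 ⟨j₂, Finset.mem_range.2 hj₂k, rfl⟩
          have hgle : ∀ m, (if m = l then (-1:ℝ) else 0) + (if m = f j₂ then 1 else 0)
              ≤ Sm l m * v m := by
            intro m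
            by_cases h1 : m = l
            · rw [h1, if_pos rfl, if_neg (fun hh => hne2 (hh.symm)), add_zero]
              have hvl : v l = 1 := by simp [hv, hl]
              rw [hvl, mul_one, hSdiag]
            · by_cases h2 : m = f j₂
              · rw [h2, if_neg (fun hh => h1 (h2.trans hh)), if_pos rfl, zero_add]
                have hvl : v (f j₂) = 1 := by simp [hv, hfj₂V]
                rw [hvl, mul_one, hSm1]
              · rw [if_neg h1, if_neg h2, add_zero]
                exact mul_nonneg (hSoff l m (fun hh => h1 hh.symm)) (hv0 m)
          rw [hmv]
          calc (0:ℝ) = ∑ m, ((if m = l then (-1:ℝ) else 0) + (if m = f j₂ then 1 else 0)) := by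
                rw [Finset.sum_add_distrib, Finset.sum_ite_eq' Finset.univ l,
                  Finset.sum_ite_eq' Finset.univ (f j₂)]
                simp
            _ ≤ ∑ m, Sm l m * v m := Finset.sum_le_sum (fun m _ => hgle m)
        · rw [hmv]
          apply Finset.sum_nonneg
          intro m _
          by_cases hm : m ∈ V
          · exact mul_nonneg (hSoff l m (fun hh => hl (hh ▸ hm))) (hv0 m)
          · have : v m = 0 := by simp [hv, hm]
            rw [this, mul_zero]
      obtain ⟨z, hz, hz0⟩ := key Sm hSoff v hv0 (f 0) (by simp [hv, hf0]) hSv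
      exact absurd (hH z hz) (not_lt.2 hz0)
    -- conclude M is Hurwitz
    intro z hz
    have hMoff : ∀ a b, a ≠ b → 0 ≤ M a b := by
      intro a b hab
      rw [← sign_nonneg_iff, hsign a b, sign_nonneg_iff]
      exact hP a b hab
    have hMdiag : ∀ i, M i i < 0 := fun i =>
      sign_eq_neg_one_iff.1 (by rw [hsign i i]; exact hdiagP i)
    have hdet : (algebraMap ℂ (Matrix (Fin d) (Fin d) ℂ) z - M.map Complex.ofReal).det = 0 := by
      have hnu := spectrum.mem_iff.1 hz
      by_contra hd
      exact hnu ((Matrix.isUnit_iff_isUnit_det _).2 (isUnit_iff_ne_zero.2 hd))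
    rw [det_eq_prod_diag] at hdet
    · obtain ⟨i, -, hi⟩ := Finset.prod_eq_zero_iff.1 hdet
      have hAii : (algebraMap ℂ (Matrix (Fin d) (Fin d) ℂ) z - M.map Complex.ofReal) i i
          = z - (M i i : ℂ) := by
        simp [Matrix.algebraMap_matrix_apply, Matrix.map_apply]
      rw [hAii, sub_eq_zero] at hi
      have hre : z.re = M i i := by rw [hi]; simp
      rw [hre]; exact hMdiag i
    · intro σ hσ
      obtain ⟨k, f, hk, hfk, hfσ, hfne⟩ := perm_orbit σ hσ
      obtain ⟨j, hjk, hj⟩ := hnocycleM k f hk hfk hfne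
      refine ⟨f j, ?_⟩
      have hM0 : M (f (j+1)) (f j) = 0 :=
        le_antisymm (not_lt.1 hj) (hMoff _ _ (hfne j).symm)
      rw [← hfσ j]
      have hne : f (j+1) ≠ f j := (hfne j).symm
      simp [Matrix.sub_apply, Matrix.algebraMap_matrix_apply, Matrix.map_apply, hne, hM0]
end

section
/- Let Σ be a d×d Metzler sign pattern (off-diagonal signs nonnegative). Then all matrices in the qualitative class 𝒬(Σ) are Hurwitz stable if and only if all diagonal entries of Σ are negative and the directed graph on {1,…,d} with an edge (m,n), m≠n, whenever Σ_{nm} ≠ 0, is acyclic. -/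
open Matrix

section SignStabilityAux
open Matrix Polynomial List
variable {d : ℕ}


lemma algebraMap_eq_scalar (z : ℂ) :
    (algebraMap ℂ (Matrix (Fin d) (Fin d) ℂ)) z = Matrix.scalar (Fin d) z := by
  simp [Matrix.scalar_apply, Matrix.algebraMap_eq_diagonal]

lemma eval_charpoly' (A : Matrix (Fin d) (Fin d) ℂ) (z : ℂ) :
    A.charpoly.eval z = (Matrix.scalar (Fin d) z - A).det := by
  rw [Matrix.charpoly, _root_.eval_det, matPolyEquiv_charmatrix]
  simp

lemma mem_spectrum_iff_root (A : Matrix (Fin d) (Fin d) ℂ) (z : ℂ) :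
    z ∈ spectrum ℂ A ↔ A.charpoly.eval z = 0 := by
  rw [spectrum.mem_iff, Matrix.isUnit_iff_isUnit_det, isUnit_iff_ne_zero, not_not,
    eval_charpoly', algebraMap_eq_scalar]

lemma spectrum_shift (A : Matrix (Fin d) (Fin d) ℂ) (s z : ℂ) :
    z ∈ spectrum ℂ (A + s • (1 : Matrix (Fin d) (Fin d) ℂ)) ↔ z - s ∈ spectrum ℂ A := by
  rw [spectrum.mem_iff, spectrum.mem_iff]
  have : algebraMap ℂ (Matrix (Fin d) (Fin d) ℂ) z - (A + s • 1)
      = algebraMap ℂ (Matrix (Fin d) (Fin d) ℂ) (z - s) - A := by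
    rw [map_sub]
    rw [Algebra.algebraMap_eq_smul_one (A := Matrix (Fin d) (Fin d) ℂ) s]
    abel
  rw [this]

-- real matrix: roots of complex charpoly are the spectrum of the complexification
lemma real_charpoly_root_iff (M : Matrix (Fin d) (Fin d) ℝ) (z : ℂ) :
    z ∈ spectrum ℂ (M.map Complex.ofReal) ↔ (M.charpoly.map Complex.ofRealHom).eval z = 0 := by
  rw [mem_spectrum_iff_root]
  have : M.map Complex.ofReal = M.map Complex.ofRealHom := rfl
  rw [this, Matrix.charpoly_map]

lemma hurwitz_charpoly_pos {M : Matrix (Fin d) (Fin d) ℝ} (hd : 0 < d)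
    (hH : ∀ z ∈ spectrum ℂ (M.map Complex.ofReal), z.re < 0) :
    ∀ t : ℝ, 0 ≤ t → 0 < M.charpoly.eval t := by
  have hmon : M.charpoly.Monic := M.charpoly_monic
  have hndeg : M.charpoly.natDegree = d := by
    rw [M.charpoly_natDegree_eq_dim, Fintype.card_fin]
  have hnoroot : ∀ t : ℝ, 0 ≤ t → M.charpoly.eval t ≠ 0 := by
    intro t ht h0
    have : ((t : ℂ)) ∈ spectrum ℂ (M.map Complex.ofReal) := by
      rw [real_charpoly_root_iff]
      have := Polynomial.eval₂_at_apply (p := M.charpoly) Complex.ofRealHom t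
      rw [← Polynomial.eval_map] at this
      simp only [Complex.ofRealHom_eq_coe] at this
      rw [this, h0]; simp
    have := hH _ this
    simp only [Complex.ofReal_re] at this
    linarith
  -- tends to infinity
  have hdeg : 0 < M.charpoly.degree := by
    rw [Polynomial.degree_eq_natDegree hmon.ne_zero, hndeg]
    exact_mod_cast hd
  have htop := Polynomial.tendsto_atTop_of_leadingCoeff_nonneg M.charpoly hdeg
    (by rw [hmon.leadingCoeff]; norm_num)
  intro t ht
  rcases lt_or_ge 0 (M.charpoly.eval t) with h | h
  · exact h
  · exfalso
    obtain ⟨T0, hT0⟩ := Filter.eventually_atTop.mp (htop.eventually_ge_atTop 1)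
    set T := max t T0 with hTdef
    have h1 : (1:ℝ) ≤ M.charpoly.eval T := hT0 T (le_max_right _ _)
    have hcont : ContinuousOn (fun x => M.charpoly.eval x) (Set.Icc t T) :=
      (M.charpoly.continuous_aeval).continuousOn
    have hsub := intermediate_value_Icc (le_max_left t T0) hcont
    have h0mem : (0:ℝ) ∈ Set.Icc (M.charpoly.eval t) (M.charpoly.eval T) :=
      ⟨h, by linarith⟩
    obtain ⟨c, hc, hceval⟩ := hsub h0mem
    exact hnoroot c (le_trans ht hc.1) hceval
lemma pow_nonneg_entries (B : Matrix (Fin d) (Fin d) ℝ) (hB : ∀ i j, 0 ≤ B i j) (m : ℕ) :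
    ∀ i j, 0 ≤ (B ^ m) i j := by
  induction m with
  | zero => intro i j; simp [Matrix.one_apply]; split <;> norm_num
  | succ m ih =>
    intro i j
    rw [pow_succ, Matrix.mul_apply]
    exact Finset.sum_nonneg fun x _ => mul_nonneg (ih i x) (hB x j)

lemma pow_diag_ge (B : Matrix (Fin d) (Fin d) ℝ) (hB : ∀ i j, 0 ≤ B i j) (k : Fin d) (m : ℕ) :
    (B k k) ^ m ≤ (B ^ m) k k := by
  induction m with
  | zero => simp [Matrix.one_apply]
  | succ m ih =>
    rw [pow_succ, pow_succ, Matrix.mul_apply]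
    calc (B k k) ^ m * B k k ≤ (B ^ m) k k * B k k :=
          mul_le_mul_of_nonneg_right ih (hB k k)
      _ ≤ ∑ x, (B ^ m) k x * B x k := by
          apply Finset.single_le_sum (f := fun x => (B ^ m) k x * B x k)
            (fun x _ => mul_nonneg (pow_nonneg_entries B hB m k x) (hB x k)) (Finset.mem_univ k)

lemma map_pow_comm (A : Matrix (Fin d) (Fin d) ℝ) (m : ℕ) :
    (A ^ m).map Complex.ofReal = (A.map Complex.ofReal) ^ m := by
  have : ∀ N : Matrix (Fin d) (Fin d) ℝ, N.map Complex.ofReal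
      = (Complex.ofRealHom.mapMatrix : Matrix (Fin d) (Fin d) ℝ →+* _) N := fun _ => rfl
  rw [this, this, map_pow]

lemma trace_pow_le (A : Matrix (Fin d) (Fin d) ℝ) (ρ : ℝ) (hρ : 0 ≤ ρ)
    (hspec : ∀ z ∈ spectrum ℂ (A.map Complex.ofReal), ‖z‖ ≤ ρ) {m : ℕ} (hm : 0 < m) :
    (A ^ m).trace ≤ d * ρ ^ m := by
  set B := A.map Complex.ofReal with hBdef
  have htr : ((A ^ m).trace : ℂ) = (B ^ m).trace := by
    rw [← map_pow_comm]
    simp [Matrix.trace, Matrix.map_apply]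
  have hroots : (B ^ m).trace = ((B ^ m).charpoly).roots.sum :=
    Matrix.trace_eq_sum_roots_charpoly _
  have hcard : ((B ^ m).charpoly).roots.card = d := by
    have h1 : ((B ^ m).charpoly).natDegree = d := by
      rw [Matrix.charpoly_natDegree_eq_dim, Fintype.card_fin]
    have h2 := Polynomial.splits_iff_card_roots.mp (IsAlgClosed.splits (k := ℂ) ((B ^ m).charpoly))
    rw [h1] at h2
    exact h2
  have hbound : ∀ z ∈ ((B ^ m).charpoly).roots, ‖z‖ ≤ ρ ^ m := by
    intro z hz
    have hzspec : z ∈ spectrum ℂ (B ^ m) := by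
      rw [mem_spectrum_iff_root]
      exact (Polynomial.isRoot_of_mem_roots hz)
    rw [spectrum.map_pow_of_pos B hm] at hzspec
    obtain ⟨w, hw, rfl⟩ := hzspec
    rw [norm_pow]
    exact pow_le_pow_left₀ (norm_nonneg w) (hspec w hw) m
  have : (A ^ m).trace ≤ ‖(B ^ m).trace‖ := by
    rw [← htr, Complex.norm_real]
    exact le_abs_self _
  refine le_trans this ?_
  rw [hroots]
  calc ‖(((B ^ m).charpoly).roots).sum‖ ≤ ((((B ^ m).charpoly).roots).map norm).sum :=
        norm_multiset_sum_le _
    _ ≤ ((((B ^ m).charpoly).roots).map norm).card • (ρ ^ m) := by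
        apply Multiset.sum_le_card_nsmul
        intro x hx
        obtain ⟨z, hz, rfl⟩ := Multiset.mem_map.mp hx
        exact hbound z hz
    _ = d * ρ ^ m := by rw [Multiset.card_map, hcard]; simp [nsmul_eq_mul]


lemma metzler_exists_eig_re_ge (M : Matrix (Fin d) (Fin d) ℝ)
    (hM : ∀ i j, i ≠ j → 0 ≤ M i j) (k : Fin d) :
    ∃ z ∈ spectrum ℂ (M.map Complex.ofReal), M k k ≤ z.re := by
  classical
  have hd : 0 < d := k.pos
  set a : ℝ := M k k with ha
  set s₀ : ℝ := 1 + ∑ i, |M i i| with hs₀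
  -- the eigenvalue finset
  set p : Polynomial ℂ := (M.map Complex.ofReal).charpoly with hp
  set Λ : Finset ℂ := p.roots.toFinset with hΛ
  have hmon : p.Monic := Matrix.charpoly_monic _
  have hspecΛ : ∀ z, z ∈ spectrum ℂ (M.map Complex.ofReal) ↔ z ∈ Λ := by
    intro z
    rw [mem_spectrum_iff_root, hΛ, Multiset.mem_toFinset, Polynomial.mem_roots hmon.ne_zero]
    exact Iff.rfl
  have hcard : p.roots.card = d := by
    have h1 : p.natDegree = d := by rw [hp, Matrix.charpoly_natDegree_eq_dim, Fintype.card_fin]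
    have h2 := Polynomial.splits_iff_card_roots.mp (IsAlgClosed.splits (k := ℂ) p)
    rw [h1] at h2; exact h2
  have hΛne : Λ.Nonempty := by
    rw [hΛ]
    have : p.roots ≠ 0 := by
      intro h0; rw [h0] at hcard; simp at hcard; omega
    obtain ⟨z, hz⟩ := Multiset.exists_mem_of_ne_zero this
    exact ⟨z, Multiset.mem_toFinset.mpr hz⟩
  -- key claim for each shift
  have key : ∀ n : ℕ, ∃ lam ∈ Λ, a + (s₀ + n) ≤ ‖lam + (s₀ + n : ℝ)‖ := by
    intro n
    set s : ℝ := s₀ + n with hs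
    have hs1 : ∀ i, |M i i| ≤ s₀ - 1 := by
      intro i
      have : |M i i| ≤ ∑ j, |M j j| :=
        Finset.single_le_sum (f := fun j => |M j j|) (fun j _ => abs_nonneg _) (Finset.mem_univ i)
      simp [hs₀]; linarith
    have has : 1 ≤ a + s := by
      have := hs1 k
      have h2 : -a ≤ |M k k| := neg_le_abs _
      have h3 : (0:ℝ) ≤ n := Nat.cast_nonneg n
      rw [hs]; rw [ha] at h2 ⊢; linarith
    set B : Matrix (Fin d) (Fin d) ℝ := M + s • 1 with hB
    have hBnn : ∀ i j, 0 ≤ B i j := by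
      intro i j
      rcases eq_or_ne i j with rfl | hij
      · have := hs1 i
        have h2 : -M i i ≤ |M i i| := neg_le_abs _
        have h3 : (0:ℝ) ≤ n := Nat.cast_nonneg n
        simp [hB, Matrix.one_apply, hs]
        linarith
      · simpa [hB, Matrix.one_apply, hij] using hM i j hij
    have hBkk : B k k = a + s := by simp [hB, Matrix.one_apply, ha]
    have hmapB : B.map Complex.ofReal
        = M.map Complex.ofReal + (s : ℂ) • (1 : Matrix (Fin d) (Fin d) ℂ) := by
      ext i j
      rcases eq_or_ne i j with rfl | hij
      · simp [hB, Matrix.map_apply, Matrix.one_apply]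
      · simp [hB, Matrix.map_apply, Matrix.one_apply, hij]
    set ρ : ℝ := Λ.sup' hΛne (fun lam => ‖lam + (s:ℂ)‖) with hρdef
    have hρ0 : 0 ≤ ρ := by
      obtain ⟨lam, hlam⟩ := hΛne
      exact le_trans (norm_nonneg _) (Finset.le_sup' (fun lam => ‖lam + (s:ℂ)‖) hlam)
    have hspecB : ∀ z ∈ spectrum ℂ (B.map Complex.ofReal), ‖z‖ ≤ ρ := by
      intro z hz
      rw [hmapB, spectrum_shift] at hz
      have : z - s ∈ Λ := (hspecΛ _).mp hz
      have hle := Finset.le_sup' (fun lam => ‖lam + (s:ℂ)‖) this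
      have h2 : z - s + s = z := by ring
      rw [h2] at hle
      exact hle
    have hub : ∀ m : ℕ, 0 < m → (a + s) ^ m ≤ d * ρ ^ m := by
      intro m hm
      have h1 : (a + s) ^ m ≤ (B ^ m).trace := by
        rw [← hBkk]
        refine le_trans (pow_diag_ge B hBnn k m) ?_
        rw [Matrix.trace]
        exact Finset.single_le_sum (f := fun i => (B ^ m) i i)
          (fun i _ => pow_nonneg_entries B hBnn m i i) (Finset.mem_univ k)
      exact le_trans h1 (trace_pow_le B ρ hρ0 hspecB hm)
    -- conclude a + s ≤ ρ
    have hfin : a + s ≤ ρ := by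
      by_contra hcon
      push_neg at hcon
      have hq1 : ρ / (a + s) < 1 := (div_lt_one (by linarith)).mpr hcon
      have hq0 : 0 ≤ ρ / (a + s) := div_nonneg hρ0 (by linarith)
      have htend := tendsto_pow_atTop_nhds_zero_of_lt_one hq0 hq1
      have hev := htend.eventually_lt_const (show (0:ℝ) < 1 / (2 * d) by positivity)
      obtain ⟨m, hm⟩ := (hev.and (Filter.eventually_ge_atTop 1)).exists
      have hmpos : 0 < m := hm.2
      have := hub m hmpos
      have hpow : ρ ^ m = (ρ / (a+s))^m * (a+s)^m := by
        rw [div_pow, div_mul_cancel₀]; exact pow_ne_zero _ (by linarith)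
      rw [hpow] at this
      have hapos : 0 < (a + s) ^ m := pow_pos (by linarith) m
      have hd2 : (d : ℝ) * ((ρ / (a+s))^m * (a+s)^m) < (d:ℝ) * (1/(2*d) * (a+s)^m) := by
        apply mul_lt_mul_of_pos_left _ (by exact_mod_cast hd)
        exact mul_lt_mul_of_pos_right hm.1 hapos
      have : (a+s)^m < (d:ℝ) * (1/(2*d) * (a+s)^m) := lt_of_le_of_lt this hd2
      have hdne : (d:ℝ) ≠ 0 := by positivity
      rw [show (d:ℝ) * (1/(2*d) * (a+s)^m) = (a+s)^m / 2 by field_simp] at this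
      linarith
    obtain ⟨lam, hlamΛ, hlameq⟩ := Finset.exists_mem_eq_sup' hΛne (fun lam => ‖lam + (s:ℂ)‖)
    refine ⟨lam, hlamΛ, ?_⟩
    rw [hρdef] at hfin
    rw [hlameq] at hfin
    simpa using hfin
  -- pigeonhole
  choose f hfΛ hfineq using key
  set g : ℕ → ↥Λ := fun n => ⟨f n, hfΛ n⟩ with hg
  obtain ⟨lam, hlam⟩ := Finite.exists_infinite_fiber g
  have hSinf : (g ⁻¹' {lam}).Infinite := Set.infinite_coe_iff.mp hlam
  refine ⟨(lam : ℂ), (hspecΛ _).mpr lam.2, ?_⟩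
  by_contra hcon
  push_neg at hcon
  set ε : ℝ := a - (lam : ℂ).re with hε
  have hεpos : 0 < ε := by rw [hε]; linarith
  set C : ℝ := (lam:ℂ).re^2 + (lam:ℂ).im^2 - a^2 with hC
  have hkey2 : ∀ n ∈ g ⁻¹' {lam}, 2 * (s₀ + n) * ε ≤ C := by
    intro n hn
    have heq : (f n : ℂ) = lam := by
      have : g n = lam := hn
      rw [hg] at this
      exact congrArg Subtype.val this
    have h1 := hfineq n
    rw [heq] at h1
    have h2 : (a + (s₀ + n))^2 ≤ ‖(lam:ℂ) + (s₀ + n : ℝ)‖^2 := by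
      apply pow_le_pow_left₀ _ h1 2
      have h3 : 1 ≤ a + (s₀ + n) := by
        -- same bound as before
        have : |M k k| ≤ ∑ j, |M j j| :=
          Finset.single_le_sum (f := fun j => |M j j|) (fun j _ => abs_nonneg _) (Finset.mem_univ k)
        have h2 : -a ≤ |M k k| := by rw [ha]; exact neg_le_abs _
        have h3 : (0:ℝ) ≤ n := Nat.cast_nonneg n
        rw [hs₀] at *
        linarith
      linarith
    have h4 : ‖(lam:ℂ) + (s₀ + n : ℝ)‖^2 = ((lam:ℂ).re + (s₀+n))^2 + (lam:ℂ).im^2 := by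
      rw [Complex.sq_norm, Complex.normSq_apply]
      simp
      ring
    rw [h4] at h2
    rw [hC, hε]
    nlinarith [h2]
  obtain ⟨n, hnS, hngt⟩ := hSinf.exists_gt (Nat.ceil ((|C| + 2 * |s₀| * ε + 1) / (2 * ε)))
  have h5 := hkey2 n hnS
  have h6 : (|C| + 2 * |s₀| * ε + 1) / (2 * ε) < n := lt_of_le_of_lt (Nat.le_ceil _) (by exact_mod_cast hngt)
  have h7 : |C| + 2 * |s₀| * ε + 1 < n * (2 * ε) := by
    rw [div_lt_iff₀ (by positivity)] at h6
    linarith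
  have h8 : C ≤ |C| := le_abs_self _
  have h9 : -|s₀| ≤ s₀ := neg_abs_le _
  nlinarith

lemma hurwitz_det_pos {d : ℕ} {M : Matrix (Fin d) (Fin d) ℝ} (hd : 0 < d)
    (hH : ∀ z ∈ spectrum ℂ (M.map Complex.ofReal), z.re < 0) :
    0 < (-1:ℝ)^d * M.det := by
  have h0 := hurwitz_charpoly_pos hd hH 0 le_rfl
  have h1 : M.charpoly.eval 0 = M.charpoly.coeff 0 :=
    (Polynomial.coeff_zero_eq_eval_zero _).symm
  have h2 : M.det = (-1:ℝ)^d * M.charpoly.coeff 0 := by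
    have := Matrix.det_eq_sign_charpoly_coeff M
    rwa [Fintype.card_fin] at this
  rw [h2, ← mul_assoc, ← pow_add, Even.neg_one_pow ⟨d, rfl⟩, one_mul, ← h1]
  exact h0


lemma chain_snoc_iff {r : α → α → Prop} : ∀ {a b : α} (l : List α),
    List.Chain r a (l ++ [b]) ↔ List.Chain r a l ∧ r ((a::l).getLast (cons_ne_nil _ _)) b := by
  intro a b l
  induction l generalizing a with
  | nil => simp [List.Chain]
  | cons c l ih =>
    simp only [List.Chain] at ih ⊢
    simp only [List.cons_append, List.isChain_cons_cons, ih, List.getLast_cons_cons, and_assoc]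

lemma dup_split {x : α} {L : List α} (h : List.Duplicate x L) :
    ∃ l₁ l₂ l₃ : List α, L = l₁ ++ x :: (l₂ ++ x :: l₃) := by
  induction h with
  | cons_mem hmem =>
    obtain ⟨s, t, rfl⟩ := List.append_of_mem hmem
    exact ⟨[], s, t, rfl⟩
  | @cons_duplicate y l h ih =>
    obtain ⟨l₁, l₂, l₃, rfl⟩ := ih
    exact ⟨y :: l₁, l₂, l₃, rfl⟩

lemma exists_nodup_cycle {r : α → α → Prop} :
    ∀ (n : ℕ) (L : List α) (_ : L.length ≤ n) (hne : L ≠ []),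
    List.Chain r (L.getLast hne) L →
    ∃ (l : List α) (hl : l ≠ []), l.Nodup ∧ List.Chain r (l.getLast hl) l := by
  intro n
  induction n with
  | zero => intro L hL hne _; exact absurd (List.length_pos_iff.mpr hne) (by omega)
  | succ n ih =>
    intro L hL hne hchain
    by_cases hnd : L.Nodup
    · exact ⟨L, hne, hnd, hchain⟩
    · obtain ⟨x, hx⟩ := List.exists_duplicate_iff_not_nodup.mpr hnd
      obtain ⟨l₁, l₂, l₃, rfl⟩ := dup_split hx
      have hsplit1 := (List.isChain_cons_split (l₁ := l₁) (l₂ := l₂ ++ x :: l₃)).mp hchain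
      have hsplit2 := (List.isChain_cons_split (l₁ := l₂) (l₂ := l₃)).mp hsplit1.2
      have hxx : List.Chain r x (l₂ ++ [x]) := hsplit2.1
      rw [chain_snoc_iff] at hxx
      refine ih (x :: l₂) ?_ (cons_ne_nil _ _) ?_
      · have := hL
        simp only [List.length_append, List.length_cons] at this ⊢
        omega
      · simp only [List.Chain]
        rw [List.isChain_cons_cons]
        refine ⟨?_, hxx.1⟩
        have : (x :: l₂).getLast (cons_ne_nil _ _) = (x :: l₂).getLast (cons_ne_nil _ _) := rfl
        exact hxx.2

lemma cycle_edges {r : α → α → Prop} [DecidableEq α] (l : List α) (hl : l ≠ [])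
    (hnd : l.Nodup) (hchain : List.Chain r (l.getLast hl) l) :
    ∀ x ∈ l, r x (l.formPerm x) := by
  intro x hx
  obtain ⟨i, hi, rfl⟩ := List.getElem_of_mem hx
  rw [List.formPerm_apply_getElem _ hnd i hi]
  replace hchain : (∀ h : 0 < l.length, r (l.getLast hl) (l.get ⟨0, h⟩)) ∧
      ∀ (i : ℕ) (h : i < l.length - 1), r (l.get ⟨i, by omega⟩) (l.get ⟨i+1, by omega⟩) := by
    simp only [List.Chain, List.isChain_iff_getElem] at hchain
    exact ⟨fun h => by simpa using hchain 0 (by simp only [List.length_cons]; omega),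
      fun i h => by
        have := hchain (i+1) (by simp only [List.length_cons]; omega)
        rw [List.getElem_cons_succ, List.getElem_cons_succ] at this
        simpa using this⟩
  rcases Nat.lt_or_ge (i+1) l.length with hlt | hge
  · have := hchain.2 i (by omega)
    simp only [List.get_eq_getElem] at this
    have hmod : (i+1) % l.length = i + 1 := Nat.mod_eq_of_lt hlt
    simpa [hmod] using this
  · have hieq : i = l.length - 1 := by omega
    have hmod : (i+1) % l.length = 0 := by
      have : i + 1 = l.length := by omega
      simp [this]
    have h0 := hchain.1 (List.length_pos_iff.mpr hl)
    simp only [List.get_eq_getElem] at h0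
    have hlast : l.getLast hl = l[i] := by
      rw [List.getLast_eq_getElem]
      congr 1
      omega
    rw [hlast] at h0
    simpa [hmod] using h0


lemma backward_hurwitz (P : Matrix (Fin d) (Fin d) ℝ)
    (hdiag : ∀ i, P i i < 0)
    (hacyc : ∀ m : Fin d, ¬ Relation.TransGen (fun a b : Fin d => a ≠ b ∧ P b a ≠ 0) m m)
    (M : Matrix (Fin d) (Fin d) ℝ)
    (hsign : ∀ i j, SignType.sign (M i j) = SignType.sign (P i j)) :
    ∀ z ∈ spectrum ℂ (M.map Complex.ofReal), z.re < 0 := by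
  classical
  set r : Fin d → Fin d → Prop := fun a b => a ≠ b ∧ P b a ≠ 0 with hr
  set height : Fin d → ℕ :=
    fun x => (Finset.univ.filter (fun j => Relation.TransGen r j x)).card with hheight
  have hstep : ∀ x y, r x y → height x < height y := by
    intro x y hxy
    apply Finset.card_lt_card
    constructor
    · intro j hj
      rw [Finset.mem_filter] at hj ⊢
      exact ⟨Finset.mem_univ _, hj.2.tail hxy⟩
    · intro hsub
      have hx : x ∈ Finset.univ.filter (fun j => Relation.TransGen r j y) := by
        rw [Finset.mem_filter]
        exact ⟨Finset.mem_univ _, Relation.TransGen.single hxy⟩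
      have h2 := hsub hx
      rw [Finset.mem_filter] at h2
      exact hacyc x h2.2
  set key : Fin d → ℕ := fun x => x.val + (d+1) * height x with hkey
  have hkeyinj : Function.Injective key := by
    intro x y hxy
    have h1 : key x % (d+1) = x.val := by
      rw [hkey]; simp [Nat.add_mul_mod_self_left, Nat.mod_eq_of_lt (lt_trans x.isLt (Nat.lt_succ_self d))]
    have h2 : key y % (d+1) = y.val := by
      rw [hkey]; simp [Nat.add_mul_mod_self_left, Nat.mod_eq_of_lt (lt_trans y.isLt (Nat.lt_succ_self d))]
    apply Fin.ext
    rw [← h1, ← h2, hxy]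
  have hkeymono : ∀ x y, r x y → key x < key y := by
    intro x y hxy
    have h1 := hstep x y hxy
    have h2 : x.val < d + 1 := lt_trans x.isLt (Nat.lt_succ_self d)
    calc key x = x.val + (d+1) * height x := rfl
      _ < (d+1) + (d+1) * height x := by omega
      _ = (d+1) * (height x + 1) := by ring
      _ ≤ (d+1) * height y := Nat.mul_le_mul_left _ h1
      _ ≤ y.val + (d+1) * height y := Nat.le_add_left _ _
  -- non-zero entries of M go up in key
  have hMkey : ∀ i j, i ≠ j → M i j ≠ 0 → key j < key i := by
    intro i j hij hMij
    apply hkeymono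
    refine ⟨fun h => hij h.symm, fun hPij => ?_⟩
    have hs := hsign i j
    rw [hPij] at hs
    simp only [_root_.sign_zero, sign_eq_zero_iff] at hs
    exact hMij hs
  -- sorting permutation
  set σ : Equiv.Perm (Fin d) := Tuple.sort key with hσ
  have hsm : StrictMono (key ∘ σ) :=
    (Tuple.monotone_sort key).strictMono_of_injective (hkeyinj.comp σ.injective)
  intro z hz
  rw [mem_spectrum_iff_root, eval_charpoly'] at hz
  set N : Matrix (Fin d) (Fin d) ℂ := M.map Complex.ofReal with hN
  set E : Matrix (Fin d) (Fin d) ℂ := Matrix.scalar (Fin d) z - N with hE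
  have hdet : E.det = ((E.submatrix σ σ)).det := (Matrix.det_submatrix_equiv_self σ E).symm
  have htri : (E.submatrix σ σ).BlockTriangular OrderDual.toDual := by
    intro i j hij
    have hlt : i < j := hij
    have hne : σ i ≠ σ j := fun h => (ne_of_lt hlt) (σ.injective h)
    have hEentry : E (σ i) (σ j) = -(N (σ i) (σ j)) := by
      rw [hE]
      simp [Matrix.scalar_apply, Matrix.sub_apply, Matrix.diagonal_apply_ne _ hne]
    by_contra hcon
    have hMne : M (σ i) (σ j) ≠ 0 := by
      intro h0
      apply hcon
      rw [Matrix.submatrix_apply, hEentry, hN]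
      simp [Matrix.map_apply, h0]
    have := hMkey (σ i) (σ j) hne hMne
    have h2 : key (σ i) < key (σ j) := hsm hlt
    omega
  have hdiagprod : E.det = ∏ i, E (σ i) (σ i) := by
    rw [hdet, Matrix.det_of_lowerTriangular _ htri]
    rfl
  rw [hdiagprod] at hz
  obtain ⟨i, -, hi0⟩ := Finset.prod_eq_zero_iff.mp hz
  have hEii : E (σ i) (σ i) = z - (M (σ i) (σ i) : ℂ) := by
    rw [hE]
    simp [Matrix.scalar_apply, Matrix.sub_apply, Matrix.diagonal_apply_eq, hN, Matrix.map_apply]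
  rw [hEii, sub_eq_zero] at hi0
  have hMneg : M (σ i) (σ i) < 0 := by
    have hs := hsign (σ i) (σ i)
    rw [sign_eq_neg_one_iff.mpr (hdiag (σ i))] at hs
    exact sign_eq_neg_one_iff.mp hs
  rw [hi0]
  simpa using hMneg


lemma no_cycle (P : Matrix (Fin d) (Fin d) ℝ)
    (hP : ∀ i j, i ≠ j → 0 ≤ P i j)
    (hdiag : ∀ i, P i i < 0)
    (H : ∀ M : Matrix (Fin d) (Fin d) ℝ,
      (∀ i j, SignType.sign (M i j) = SignType.sign (P i j)) →
      ∀ z ∈ spectrum ℂ (M.map Complex.ofReal), z.re < 0)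
    (m : Fin d)
    (hcyc : Relation.TransGen (fun a b : Fin d => a ≠ b ∧ P b a ≠ 0) m m) : False := by
  classical
  set r : Fin d → Fin d → Prop := fun a b => a ≠ b ∧ P b a ≠ 0 with hr
  have hd : 0 < d := m.pos
  -- extract a closed walk
  obtain ⟨c, hmc, hcm⟩ := (Relation.TransGen.head'_iff).mp hcyc
  obtain ⟨l0, hl0chain, hl0last⟩ := List.exists_isChain_cons_of_relationReflTransGen hcm
  have hLne : (c :: l0 : List (Fin d)) ≠ [] := cons_ne_nil _ _
  have hLchain : List.Chain r ((c :: l0).getLast hLne) (c :: l0) := by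
    have hgl : (c :: l0).getLast hLne = m := hl0last
    rw [hgl]
    simp only [List.Chain]
    rw [List.isChain_cons_cons]
    exact ⟨hmc, hl0chain⟩
  obtain ⟨l, hlne, hlnd, hlchain⟩ :=
    exists_nodup_cycle (c :: l0).length (c :: l0) le_rfl hLne hLchain
  have hedges : ∀ x ∈ l, r x (l.formPerm x) := cycle_edges l hlne hlnd hlchain
  -- (hlen2' will be proven below before σ is set)
  have hlen2' : 2 ≤ l.length := by
    by_contra hcon
    push_neg at hcon
    have h01 : l.length = 0 ∨ l.length = 1 := by omega
    rcases h01 with h0 | h1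
    · exact hlne (List.length_eq_zero_iff.mp h0)
    · obtain ⟨x, rfl⟩ := List.length_eq_one_iff.mp h1
      have h2 : ([x] : List (Fin d)).getLast (cons_ne_nil _ _) = x := rfl
      rw [h2] at hlchain
      simp only [List.Chain, List.isChain_pair] at hlchain
      exact hlchain.1 rfl
  set σ : Equiv.Perm (Fin d) := l.formPerm with hσdef
  set L : ℕ := l.length with hLdef
  have hlen2 : 2 ≤ L := hlen2'
  have hne1 : ∀ x : Fin d, l ≠ [x] := by
    intro x h
    rw [h] at hLdef
    simp at hLdef
    omega
  have hσnotmem : ∀ x : Fin d, x ∉ l → σ x = x := fun x hx => List.formPerm_apply_of_notMem hx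
  have hσne : ∀ x ∈ l, σ x ≠ x := fun x hx => ((hedges x hx).1).symm
  have hσmem : ∀ x ∈ l, σ x ∈ l := fun x hx => List.formPerm_apply_mem_of_mem hx
  have hcycle : σ.IsCycle := List.isCycle_formPerm hlnd hlen2
  have hsupp : σ.support = l.toFinset := List.support_formPerm_of_nodup l hlnd hne1
  have hcardsupp : l.toFinset.card = L := by
    rw [List.toFinset_card_of_nodup hlnd]
  have hsign_σ : Equiv.Perm.sign σ = -(-1)^L := by
    rw [hcycle.sign, hsupp, hcardsupp]
  have hLd : L ≤ d := by
    rw [← hcardsupp]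
    simpa using Finset.card_le_univ l.toFinset
  -- constants
  set c0 : ℝ := 2 * (Nat.factorial d) + 2 with hc0
  have hc0pos : 0 < c0 := by positivity
  have hc0ge1 : 1 ≤ c0 := by
    have : (1:ℝ) ≤ (Nat.factorial d : ℝ) := by exact_mod_cast Nat.one_le_iff_ne_zero.mpr (Nat.factorial_ne_zero d)
    rw [hc0]; linarith
  set δ : ℝ := 1 / c0 with hδ
  have hδpos : 0 < δ := by positivity
  have hδle1 : δ ≤ 1 := by
    rw [hδ, div_le_one hc0pos]; linarith
  -- the matrix
  set M : Matrix (Fin d) (Fin d) ℝ := fun i j =>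
    if i = j then -1 else if j ∈ l ∧ i = l.formPerm j then c0 else if P i j ≠ 0 then δ else 0
    with hM
  have hsigneq : ∀ i j, SignType.sign (M i j) = SignType.sign (P i j) := by
    intro i j
    rcases eq_or_ne i j with rfl | hij
    · rw [hM]
      simp only [if_pos rfl]
      rw [sign_eq_neg_one_iff.mpr (hdiag i)]
      norm_num
    · rw [hM]
      simp only [if_neg hij]
      by_cases hcycb : j ∈ l ∧ i = l.formPerm j
      · rw [if_pos hcycb]
        have hPne : P i j ≠ 0 := by
          have := (hedges j hcycb.1).2
          rwa [← hcycb.2] at this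
        have hPpos : 0 < P i j := lt_of_le_of_ne (hP i j hij) (Ne.symm hPne)
        rw [sign_eq_one_iff.mpr hPpos, sign_eq_one_iff.mpr hc0pos]
      · rw [if_neg hcycb]
        by_cases hPij : P i j ≠ 0
        · rw [if_pos hPij]
          have hPpos : 0 < P i j := lt_of_le_of_ne (hP i j hij) (Ne.symm hPij)
          rw [sign_eq_one_iff.mpr hPpos, sign_eq_one_iff.mpr hδpos]
        · push_neg at hPij
          rw [if_neg (by simpa using hPij), hPij]
  have hH := H M hsigneq
  have hpos := hurwitz_det_pos hd hH
  -- entry facts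
  have hMcyc : ∀ i ∈ l, M (σ i) i = c0 := by
    intro i hi
    simp only [hM]
    split_ifs with h1 h2 h3
    · exact absurd h1 (hσne i hi)
    · rfl
    · exact absurd ⟨hi, by trivial⟩ h2
    · exact absurd ⟨hi, by trivial⟩ h2
  have hMdiag : ∀ i : Fin d, i ∉ l → M (σ i) i = -1 := by
    intro i hi
    rw [hσnotmem i hi]
    simp only [hM]
    simp
  -- per-entry bounds
  have habs_le_c0 : ∀ i j, |M i j| ≤ c0 := by
    intro i j
    simp only [hM]
    split_ifs
    · rw [abs_neg, abs_one]; linarith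
    · rw [abs_of_pos hc0pos]
    · rw [abs_of_pos hδpos]; linarith
    · rw [abs_zero]; linarith
  have habs_noncyc : ∀ i j : Fin d, ¬(j ∈ l ∧ i = l.formPerm j) → |M i j| ≤ 1 := by
    intro i j hnc
    simp only [hM]
    by_cases h1 : i = j
    · rw [if_pos h1, abs_neg, abs_one]
    · rw [if_neg h1, if_neg hnc]
      by_cases h3 : P i j ≠ 0
      · rw [if_pos h3, abs_of_pos hδpos]; exact hδle1
      · rw [if_neg h3, abs_zero]; norm_num
  have habs_offd : ∀ i j : Fin d, i ≠ j → ¬(j ∈ l ∧ i = l.formPerm j) → |M i j| ≤ δ := by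
    intro i j hij hnc
    simp only [hM]
    rw [if_neg hij, if_neg hnc]
    by_cases h3 : P i j ≠ 0
    · rw [if_pos h3, abs_of_pos hδpos]
    · rw [if_neg h3, abs_zero]; linarith
  -- determinant expansion
  have hdet := Matrix.det_apply' M
  -- the main term
  have hmain : ((Equiv.Perm.sign σ : ℤ) : ℝ) * ∏ i, M (σ i) i
      = (-(-1:ℝ)^L) * (c0 ^ L * (-1:ℝ)^(d - L)) := by
    have hprod : ∏ i, M (σ i) i = c0 ^ L * (-1:ℝ)^(d - L) := by
      rw [← Finset.prod_mul_prod_compl l.toFinset]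
      congr 1
      · rw [Finset.prod_congr rfl (fun i hi => hMcyc i (List.mem_toFinset.mp hi)),
          Finset.prod_const, hcardsupp]
      · rw [Finset.prod_congr rfl
          (fun i hi => hMdiag i (fun h => by simp [List.mem_toFinset.mpr h] at hi)),
          Finset.prod_const, Finset.card_compl, Fintype.card_fin, hcardsupp]
    rw [hprod, hsign_σ]
    push_cast
    ring
  have hprodite : ∀ T : Finset (Fin d),
      (∏ i : Fin d, (if i ∈ T then c0 else 1)) = c0 ^ T.card := by
    intro T
    rw [← Finset.prod_mul_prod_compl T]
    rw [Finset.prod_congr rfl (fun i hi => if_pos hi),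
      Finset.prod_congr rfl (fun i hi => if_neg (by simpa using hi)),
      Finset.prod_const, Finset.prod_const, one_pow, mul_one]
  -- bound for other permutations
  have hrest : ∀ τ : Equiv.Perm (Fin d), τ ≠ σ → |∏ i, M (τ i) i| ≤ c0 ^ (L - 1) := by
    intro τ hτ
    by_cases hcase : ∀ j ∈ l, τ j = σ j
    · -- case A : exists off-cycle non-fixed point
      have hex : ∃ x, τ x ≠ σ x := by
        by_contra hcon
        push_neg at hcon
        exact hτ (Equiv.ext hcon)
      obtain ⟨j₀, hj₀⟩ := hex
      have hj₀nl : j₀ ∉ l := fun h => hj₀ (hcase j₀ h)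
      have hτj₀ : τ j₀ ≠ j₀ := by
        intro h
        rw [hσnotmem j₀ hj₀nl] at hj₀
        exact hj₀ (by rw [h])
      have h1 : |∏ i, M (τ i) i| = |M (τ j₀) j₀| * |∏ i ∈ Finset.univ.erase j₀, M (τ i) i| := by
        rw [← abs_mul, ← Finset.mul_prod_erase Finset.univ _ (Finset.mem_univ j₀)]
      have h2 : |M (τ j₀) j₀| ≤ δ := by
        apply habs_offd _ _ hτj₀
        intro hc
        exact hj₀nl hc.1
      have h3 : |∏ i ∈ Finset.univ.erase j₀, M (τ i) i| ≤ c0 ^ L := by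
        rw [Finset.abs_prod]
        calc ∏ i ∈ Finset.univ.erase j₀, |M (τ i) i|
            ≤ ∏ i ∈ Finset.univ.erase j₀, (if i ∈ l.toFinset then c0 else 1) := by
              apply Finset.prod_le_prod (fun i _ => abs_nonneg _)
              intro i hi
              by_cases hmem : i ∈ l.toFinset
              · rw [if_pos hmem]; exact habs_le_c0 _ _
              · rw [if_neg hmem]
                exact habs_noncyc _ _ (fun hc => hmem (List.mem_toFinset.mpr hc.1))
          _ ≤ ∏ i : Fin d, (if i ∈ l.toFinset then c0 else 1) := by
              rw [← Finset.mul_prod_erase Finset.univ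
                (fun i => if i ∈ l.toFinset then c0 else 1) (Finset.mem_univ j₀)]
              apply le_mul_of_one_le_left
              · apply Finset.prod_nonneg
                intro i _
                split <;> linarith
              · split <;> linarith
          _ = c0 ^ L := by rw [hprodite l.toFinset, hcardsupp]
      calc |∏ i, M (τ i) i| ≤ δ * c0 ^ L := by
            rw [h1]; exact mul_le_mul h2 h3 (abs_nonneg _) (le_of_lt hδpos)
        _ = c0 ^ (L - 1) := by
            rw [hδ]
            have hLpos : 1 ≤ L := by omega
            have : c0 ^ L = c0 * c0 ^ (L - 1) := by
              rw [← pow_succ']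
              congr 1
              omega
            rw [this]
            field_simp
    · -- case B : τ disagrees with σ somewhere on the cycle
      push_neg at hcase
      obtain ⟨j₁, hj₁l, hj₁⟩ := hcase
      set S : Finset (Fin d) := Finset.univ.filter (fun i => i ∈ l.toFinset ∧ τ i = σ i) with hS
      have hSsub : S ⊆ l.toFinset.erase j₁ := by
        intro i hi
        rw [hS, Finset.mem_filter] at hi
        rw [Finset.mem_erase]
        refine ⟨?_, hi.2.1⟩
        intro h
        rw [h] at hi
        exact hj₁ hi.2.2
      have hScard : S.card ≤ L - 1 := by
        have := Finset.card_le_card hSsub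
        rw [Finset.card_erase_of_mem (List.mem_toFinset.mpr hj₁l), hcardsupp] at this
        exact this
      calc |∏ i, M (τ i) i| = ∏ i, |M (τ i) i| := Finset.abs_prod _ _
        _ ≤ ∏ i : Fin d, (if i ∈ S then c0 else 1) := by
            apply Finset.prod_le_prod (fun i _ => abs_nonneg _)
            intro i _
            by_cases hmem : i ∈ S
            · rw [if_pos hmem]; exact habs_le_c0 _ _
            · rw [if_neg hmem]
              refine habs_noncyc _ _ (fun hc => hmem ?_)
              rw [hS, Finset.mem_filter]
              exact ⟨Finset.mem_univ _, List.mem_toFinset.mpr hc.1, hc.2⟩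
        _ = c0 ^ S.card := hprodite S
        _ ≤ c0 ^ (L - 1) := pow_le_pow_right₀ hc0ge1 hScard
  -- assemble the determinant bound
  have hsum : M.det = ((Equiv.Perm.sign σ : ℤ) : ℝ) * ∏ i, M (σ i) i
      + ∑ τ ∈ Finset.univ.erase σ, ((Equiv.Perm.sign τ : ℤ) : ℝ) * ∏ i, M (τ i) i := by
    rw [hdet, ← Finset.add_sum_erase _ _ (Finset.mem_univ σ)]
  have hpowpos : (0:ℝ) < c0 ^ (L-1) := pow_pos hc0pos _
  have hrestbound : |∑ τ ∈ Finset.univ.erase σ, ((Equiv.Perm.sign τ:ℤ):ℝ) * ∏ i, M (τ i) i|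
      ≤ (Nat.factorial d : ℝ) * c0 ^ (L-1) := by
    calc |∑ τ ∈ Finset.univ.erase σ, ((Equiv.Perm.sign τ:ℤ):ℝ) * ∏ i, M (τ i) i|
        ≤ ∑ τ ∈ Finset.univ.erase σ, |((Equiv.Perm.sign τ:ℤ):ℝ) * ∏ i, M (τ i) i| :=
          Finset.abs_sum_le_sum_abs _ _
      _ ≤ ∑ _τ ∈ Finset.univ.erase σ, c0 ^ (L-1) := by
          apply Finset.sum_le_sum
          intro τ hτ
          have hne : τ ≠ σ := (Finset.mem_erase.mp hτ).1
          rw [abs_mul]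
          have h1 : |((Equiv.Perm.sign τ : ℤ) : ℝ)| = 1 := by
            rcases Int.units_eq_one_or (Equiv.Perm.sign τ) with h | h <;> rw [h] <;> norm_num
          rw [h1, one_mul]
          exact hrest τ hne
      _ = ((Finset.univ.erase σ).card : ℝ) * c0 ^ (L-1) := by
          rw [Finset.sum_const, nsmul_eq_mul]
      _ ≤ (Nat.factorial d : ℝ) * c0 ^ (L-1) := by
          apply mul_le_mul_of_nonneg_right _ (le_of_lt hpowpos)
          have h1 : (Finset.univ.erase σ).card ≤ Fintype.card (Equiv.Perm (Fin d)) := by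
            exact le_trans (Finset.card_le_card (Finset.erase_subset _ _)) (le_of_eq (Finset.card_univ))
          have h2 : Fintype.card (Equiv.Perm (Fin d)) = Nat.factorial d := by
            rw [Fintype.card_perm, Fintype.card_fin]
          exact_mod_cast h2 ▸ h1
  have hmain2 : (-1:ℝ)^d * (((Equiv.Perm.sign σ:ℤ):ℝ) * ∏ i, M (σ i) i) = -c0^L := by
    rw [hmain]
    have hexp : (-1:ℝ)^L * (-1:ℝ)^(d-L) = (-1:ℝ)^d := by
      rw [← pow_add]; congr 1; omega
    calc (-1:ℝ)^d * (-(-1:ℝ)^L * (c0^L * (-1:ℝ)^(d-L)))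
        = -(c0^L * ((-1:ℝ)^L * (-1:ℝ)^(d-L) * (-1:ℝ)^d)) := by ring
      _ = -(c0^L * ((-1:ℝ)^d * (-1:ℝ)^d)) := by rw [hexp]
      _ = -(c0^L * ((-1:ℝ)^(d+d))) := by rw [pow_add]
      _ = -c0^L := by rw [Even.neg_one_pow ⟨d, rfl⟩]; ring
  have hfin : (-1:ℝ)^d * M.det ≤ -c0^L + (Nat.factorial d : ℝ) * c0^(L-1) := by
    rw [hsum, mul_add, hmain2]
    have h2 := le_abs_self ((-1:ℝ)^d *
      ∑ τ ∈ Finset.univ.erase σ, ((Equiv.Perm.sign τ:ℤ):ℝ) * ∏ i, M (τ i) i)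
    rw [abs_mul, abs_pow, abs_neg, abs_one, one_pow, one_mul] at h2
    linarith [hrestbound]
  have hlast : -c0^L + (Nat.factorial d : ℝ) * c0^(L-1) < 0 := by
    have hsp : c0^L = c0 * c0^(L-1) := by
      rw [← pow_succ']
      congr 1
      omega
    have hfnn : (0:ℝ) ≤ (Nat.factorial d : ℝ) := by positivity
    rw [hsp, hc0]
    nlinarith [hpowpos]
  linarith [hpos, hfin, hlast]

end SignStabilityAux

theorem sign_stability_iff_neg_diagonal_acyclic {d : ℕ}
    (P : Matrix (Fin d) (Fin d) ℝ) (hP : ∀ i j, i ≠ j → 0 ≤ P i j) :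
    (∀ M : Matrix (Fin d) (Fin d) ℝ,
        (∀ i j, SignType.sign (M i j) = SignType.sign (P i j)) → IsHurwitz M) ↔
      ((∀ i, P i i < 0) ∧
        ∀ m : Fin d,
          ¬ Relation.TransGen (fun a b : Fin d => a ≠ b ∧ P b a ≠ 0) m m) := by
  constructor
  · intro H
    have hdiag : ∀ i, P i i < 0 := by
      intro k
      have hHP : IsHurwitz P := H P (fun i j => rfl)
      obtain ⟨z, hz, hge⟩ := metzler_exists_eig_re_ge P hP k
      have := hHP z hz
      linarith
    refine ⟨hdiag, ?_⟩
    intro m hcyc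
    exact no_cycle P hP hdiag (fun M hs => H M hs) m hcyc
  · rintro ⟨hdiag, hacyc⟩ M hsign
    exact backward_hurwitz P hdiag hacyc M hsign
end

section
/- Let A and A' be two d×d Metzler matrices with identical zero/nonzero off-diagonal patterns (A_{nm} ≠ 0 ⟺ A'_{nm} ≠ 0 for n ≠ m) and let i ≠ j. Then the system (A, e_i, e_jᵀ) is output controllable if and only if (A', e_i, e_jᵀ) is, i.e., output controllability of a Metzler system with canonical input/output vectors depends only on the sign pattern of the off-diagonal entries. -/
open Matrix

attribute [local instance] Classical.propDecidable

/-- Edge relation of the pattern graph: `PatRel A m n` iff there is an edge `m → n`,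
i.e. `A n m ≠ 0` and `n ≠ m`. -/
def PatRel {d : ℕ} (A : Matrix (Fin d) (Fin d) ℝ) (m n : Fin d) : Prop :=
  A n m ≠ 0 ∧ n ≠ m

/-- `PathN R n i j` : there is a path of length `n` from `i` to `j` along `R`. -/
def PathN {d : ℕ} (R : Fin d → Fin d → Prop) : ℕ → Fin d → Fin d → Prop
  | 0, i, j => i = j
  | n+1, i, j => ∃ m, R i m ∧ PathN R n m j

lemma zero_of_no_path {d : ℕ} (A : Matrix (Fin d) (Fin d) ℝ) (N : ℕ) :
    ∀ i j, (∀ n ≤ N, ¬ PathN (PatRel A) n i j) → (A ^ N) j i = 0 := by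
  induction N with
  | zero =>
    intro i j h
    have hne : i ≠ j := fun e => h 0 le_rfl e
    rw [pow_zero]
    exact Matrix.one_apply_ne (Ne.symm hne)
  | succ N ih =>
    intro i j h
    rw [pow_succ, Matrix.mul_apply]
    apply Finset.sum_eq_zero
    intro m _
    by_cases hmi : A m i = 0
    · rw [hmi, mul_zero]
    by_cases hm : m = i
    · subst hm
      rw [ih m j (fun n hn => h n (hn.trans (Nat.le_succ N))), zero_mul]
    · rw [ih m j ?_, zero_mul]
      intro n hn hp
      exact h (n+1) (Nat.succ_le_succ hn) ⟨m, ⟨hmi, hm⟩, hp⟩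

lemma pos_of_min_path {d : ℕ} (A : Matrix (Fin d) (Fin d) ℝ) (hA : IsMetzler A) :
    ∀ N, ∀ i j, (∀ n < N, ¬ PathN (PatRel A) n i j) → PathN (PatRel A) N i j →
      0 < (A ^ N) j i := by
  intro N
  induction N with
  | zero =>
    intro i j _ hp
    have : i = j := hp
    subst this
    rw [pow_zero, Matrix.one_apply_eq]
    exact zero_lt_one
  | succ N ih =>
    intro i j hmin hpath
    obtain ⟨m0, ⟨hm0ne, hm0i⟩, hp0⟩ := hpath
    rw [pow_succ, Matrix.mul_apply]
    apply Finset.sum_pos'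
    · intro m _
      by_cases hmi : A m i = 0
      · rw [hmi, mul_zero]
      by_cases hm : m = i
      · subst hm
        rw [zero_of_no_path A N _ j (fun n hn => hmin n (Nat.lt_succ_of_le hn)), zero_mul]
      have hApos : 0 < A m i := lt_of_le_of_ne (hA m i hm) (Ne.symm hmi)
      by_cases hE : ∃ n, PathN (PatRel A) n m j
      · have hfind := Nat.find_spec hE
        rcases lt_trichotomy (Nat.find hE) N with hlt | heq | hgt
        · exact absurd ⟨m, ⟨hmi, hm⟩, hfind⟩ (hmin (Nat.find hE + 1) (Nat.succ_lt_succ hlt))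
        · have hpos := ih m j (fun n hn => Nat.find_min hE (heq ▸ hn)) (heq ▸ hfind)
          exact le_of_lt (mul_pos hpos hApos)
        · rw [zero_of_no_path A N m j
            (fun n hn hp => Nat.lt_irrefl _ (lt_of_le_of_lt ((Nat.find_le hp).trans hn) hgt)),
            zero_mul]
      · rw [zero_of_no_path A N m j (fun n _ hp => hE ⟨n, hp⟩), zero_mul]
    · refine ⟨m0, Finset.mem_univ m0, mul_pos ?_ (lt_of_le_of_ne (hA m0 i hm0i) (Ne.symm hm0ne))⟩
      exact ih m0 j
        (fun n hn hp => hmin (n+1) (Nat.succ_lt_succ hn) ⟨m0, ⟨hm0ne, hm0i⟩, hp⟩) hp0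

lemma path_of_pow {d : ℕ} (A : Matrix (Fin d) (Fin d) ℝ) :
    ∀ k, ∀ i j, (A ^ k) j i ≠ 0 → ∃ n, PathN (PatRel A) n i j := by
  intro k
  induction k with
  | zero =>
    intro i j h
    rw [pow_zero] at h
    by_cases hji : j = i
    · exact ⟨0, hji.symm⟩
    · exact absurd (Matrix.one_apply_ne hji) h
  | succ k ih =>
    intro i j h
    rw [pow_succ, Matrix.mul_apply] at h
    obtain ⟨m, _, hm⟩ := Finset.exists_ne_zero_of_sum_ne_zero h
    have ha : (A ^ k) j m ≠ 0 := left_ne_zero_of_mul hm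
    have hb : A m i ≠ 0 := right_ne_zero_of_mul hm
    obtain ⟨n, hp⟩ := ih m j ha
    by_cases hmi : m = i
    · subst hmi; exact ⟨n, hp⟩
    · exact ⟨n + 1, m, ⟨hb, hmi⟩, hp⟩

lemma dec_path {d : ℕ} (A : Matrix (Fin d) (Fin d) ℝ) {i j : Fin d}
    (h : ∃ n, PathN (PatRel A) n i j) (hpos : 0 < Nat.find h) :
    ∃ m, ∃ hm : ∃ n, PathN (PatRel A) n m j, Nat.find hm = Nat.find h - 1 := by
  have hspec := Nat.find_spec h
  obtain ⟨N', hN'⟩ : ∃ N', Nat.find h = N' + 1 :=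
    ⟨Nat.find h - 1, (Nat.succ_pred_eq_of_pos hpos).symm⟩
  rw [hN'] at hspec
  obtain ⟨m, hR, hp⟩ := hspec
  refine ⟨m, ⟨N', hp⟩, ?_⟩
  have h1 : Nat.find (⟨N', hp⟩ : ∃ n, PathN (PatRel A) n m j) ≤ N' := Nat.find_le hp
  have h2 : ¬ Nat.find (⟨N', hp⟩ : ∃ n, PathN (PatRel A) n m j) < N' := by
    intro hlt
    have hp' := Nat.find_spec (⟨N', hp⟩ : ∃ n, PathN (PatRel A) n m j)
    exact Nat.find_min h (by omega : Nat.find _ + 1 < Nat.find h) ⟨m, hR, hp'⟩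
  omega

lemma reach_all {d : ℕ} (A : Matrix (Fin d) (Fin d) ℝ) {j : Fin d} :
    ∀ N, ∀ i, ∀ h : ∃ n, PathN (PatRel A) n i j, Nat.find h = N →
      ∀ n ≤ N, ∃ m, ∃ hm : ∃ k, PathN (PatRel A) k m j, Nat.find hm = n := by
  intro N
  induction N with
  | zero =>
    intro i h hf n hn
    exact ⟨i, h, by omega⟩
  | succ N ih =>
    intro i h hf n hn
    rcases Nat.lt_succ_iff_lt_or_eq.mp (Nat.lt_succ_of_le hn) with hlt | heq
    · obtain ⟨m, hm, hmf⟩ := dec_path A h (by omega)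
      exact ih m hm (by omega) n (by omega)
    · exact ⟨i, h, by omega⟩

lemma char_path {d : ℕ} (A : Matrix (Fin d) (Fin d) ℝ) (hA : IsMetzler A) (i j : Fin d) :
    (∃ k < d, (A ^ k) j i ≠ 0) ↔ ∃ n, PathN (PatRel A) n i j := by
  constructor
  · rintro ⟨k, _, hk⟩
    exact path_of_pow A k i j hk
  · intro h
    have hkey := pos_of_min_path A hA (Nat.find h) i j (fun n hn => Nat.find_min h hn)
      (Nat.find_spec h)
    refine ⟨Nat.find h, ?_, ne_of_gt hkey⟩
    show Nat.find h < d
    have H : ∀ n : Fin (Nat.find h + 1),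
        ∃ m, ∃ hm : ∃ k, PathN (PatRel A) k m j, Nat.find hm = (n : ℕ) :=
      fun n => reach_all A (Nat.find h) i h rfl n (Nat.lt_succ_iff.mp n.isLt)
    choose F hF hF2 using H
    have hGF : ∀ n : Fin (Nat.find h + 1),
        (fun m => if hm : ∃ k, PathN (PatRel A) k m j then Nat.find hm else 0) (F n) = (n : ℕ) :=
      fun n => by simp only [dif_pos (hF n)]; exact hF2 n
    have hinj : Function.Injective F := by
      intro a b hab
      apply Fin.val_injective
      rw [← hGF a, ← hGF b, hab]
    have hcard := Fintype.card_le_of_injective F hinj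
    simp only [Fintype.card_fin] at hcard
    omega

theorem output_controllability_depends_only_on_pattern {d : ℕ}
    (A A' : Matrix (Fin d) (Fin d) ℝ)
    (hA : IsMetzler A) (hA' : IsMetzler A')
    (i j : Fin d) (hij : i ≠ j)
    (hpat : ∀ m n : Fin d, m ≠ n → (A m n ≠ 0 ↔ A' m n ≠ 0)) :
    (∃ k < d, (Pi.single j (1 : ℝ) ᵥ* (A ^ k)) ⬝ᵥ Pi.single i (1 : ℝ) ≠ 0) ↔
      (∃ k < d, (Pi.single j (1 : ℝ) ᵥ* (A' ^ k)) ⬝ᵥ Pi.single i (1 : ℝ) ≠ 0) := by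
  have hentry : ∀ (M : Matrix (Fin d) (Fin d) ℝ) (k : ℕ),
      (Pi.single j (1 : ℝ) ᵥ* (M ^ k)) ⬝ᵥ Pi.single i (1 : ℝ) = (M ^ k) j i := by
    intro M k
    simp [vecMul, dotProduct, Pi.single_apply]
  have hRel : PatRel A = PatRel A' := by
    funext m n
    exact propext (and_congr_left fun h => hpat n m h)
  simp only [hentry]
  rw [char_path A hA i j, char_path A' hA' i j, hRel]
end

section
/- Let A⁺ be a d×d Metzler Hurwitz-stable matrix and let v₊ be a strictly positive vector with v₊ᵀA⁺ < 0 componentwise. Then for every entrywise-nonnegative matrix Δ with A⁺ − Δ Metzler and Hurwitz stable, the vector v(Δ) := ((A⁺)(A⁺ − Δ)⁻¹)ᵀ v₊ is strictly positive and satisfies v(Δ)ᵀ(A⁺ − Δ) = v₊ᵀA⁺ < 0. -/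
open Matrix

/-- Sign lemma: if `M` is Metzler and there is a strictly positive vector `w`
with `w ᵥ* M < 0`, then `x ᵥ* M ≥ 0` implies `x ≤ 0`. -/
lemma metzler_sign_lemma {d : ℕ} (M : Matrix (Fin d) (Fin d) ℝ) (hM : IsMetzler M)
    (w : Fin d → ℝ) (hw : ∀ i, 0 < w i) (hwM : ∀ j, (w ᵥ* M) j < 0)
    (x : Fin d → ℝ) (hx : ∀ j, 0 ≤ (x ᵥ* M) j) : ∀ i, x i ≤ 0 := by
  intro i
  obtain ⟨k, -, hk⟩ := Finset.exists_max_image Finset.univ (fun i => x i / w i)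
    ⟨i, Finset.mem_univ i⟩
  set t := x k / w k with ht
  have hxt : ∀ j, x j ≤ t * w j := by
    intro j
    have := hk j (Finset.mem_univ j)
    rw [div_le_iff₀ (hw j)] at this
    linarith [this]
  have hxk : x k = t * w k := by
    rw [ht, div_mul_cancel₀ _ (hw k).ne']
  rcases le_or_gt t 0 with h | h
  · calc x i ≤ t * w i := hxt i
      _ ≤ 0 := mul_nonpos_of_nonpos_of_nonneg h (hw i).le
  · exfalso
    have h1 : (x ᵥ* M) k ≤ t * (w ᵥ* M) k := by
      simp only [Matrix.vecMul, dotProduct]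
      rw [Finset.mul_sum]
      apply Finset.sum_le_sum
      intro j _
      by_cases hjk : j = k
      · subst hjk
        exact le_of_eq (by rw [hxk]; ring)
      · have h2 := mul_le_mul_of_nonneg_right (hxt j) (hM j k hjk)
        linarith [h2]
    have h3 : t * (w ᵥ* M) k < 0 := mul_neg_of_pos_of_neg h (hwM k)
    linarith [hx k]

lemma metzler_det_ne_zero {d : ℕ} (M : Matrix (Fin d) (Fin d) ℝ) (hM : IsMetzler M)
    (w : Fin d → ℝ) (hw : ∀ i, 0 < w i) (hwM : ∀ j, (w ᵥ* M) j < 0) :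
    M.det ≠ 0 := by
  intro h0
  obtain ⟨v, hv0, hv⟩ := (Matrix.exists_vecMul_eq_zero_iff).2 h0
  have h1 : ∀ i, v i ≤ 0 :=
    metzler_sign_lemma M hM w hw hwM v (by simp [hv])
  have h2 : ∀ i, -v i ≤ 0 :=
    metzler_sign_lemma M hM w hw hwM (-v) (by simp [Matrix.neg_vecMul, hv])
  exact hv0 (funext fun i => le_antisymm (h1 i) (by have := h2 i; simpa using by linarith))

lemma metzler_inv_nonpos {d : ℕ} (M : Matrix (Fin d) (Fin d) ℝ) (hM : IsMetzler M)
    (w : Fin d → ℝ) (hw : ∀ i, 0 < w i) (hwM : ∀ j, (w ᵥ* M) j < 0) :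
    ∀ i j, M⁻¹ i j ≤ 0 := by
  have hdet := metzler_det_ne_zero M hM w hw hwM
  intro i j
  apply metzler_sign_lemma M hM w hw hwM (fun l => M⁻¹ i l) _ j
  intro j'
  have h1 : ((fun l => M⁻¹ i l) ᵥ* M) j' = (M⁻¹ * M) i j' := by
    simp [Matrix.vecMul, Matrix.mul_apply, dotProduct]
  rw [h1, Matrix.nonsing_inv_mul M (isUnit_iff_ne_zero.mpr hdet), Matrix.one_apply]
  split <;> norm_num

theorem interval_lyapunov_vector_transfer {d : ℕ}
    (Ap : Matrix (Fin d) (Fin d) ℝ) (hAp : IsMetzler Ap) (hH : IsHurwitz Ap)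
    (vp : Fin d → ℝ) (hvp : ∀ i, 0 < vp i) (hvA : ∀ j, (vp ᵥ* Ap) j < 0)
    (Δ : Matrix (Fin d) (Fin d) ℝ) (hΔ : ∀ i j, 0 ≤ Δ i j)
    (hMetz : IsMetzler (Ap - Δ)) (hHΔ : IsHurwitz (Ap - Δ)) :
    (∀ i, 0 < (vp ᵥ* (Ap * (Ap - Δ)⁻¹)) i) ∧
    (vp ᵥ* (Ap * (Ap - Δ)⁻¹)) ᵥ* (Ap - Δ) = vp ᵥ* Ap ∧
    (∀ j, ((vp ᵥ* (Ap * (Ap - Δ)⁻¹)) ᵥ* (Ap - Δ)) j < 0) := by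
  set M := Ap - Δ with hMdef
  have hwM : ∀ j, (vp ᵥ* M) j < 0 := by
    intro j
    have h1 : (vp ᵥ* M) j = (vp ᵥ* Ap) j - (vp ᵥ* Δ) j := by
      simp [hMdef, Matrix.vecMul_sub]
    have h2 : 0 ≤ (vp ᵥ* Δ) j := by
      simp only [Matrix.vecMul, dotProduct]
      exact Finset.sum_nonneg fun i _ => mul_nonneg (hvp i).le (hΔ i j)
    rw [h1]
    linarith [hvA j]
  have hdet := metzler_det_ne_zero M hMetz vp hvp hwM
  have hinvle := metzler_inv_nonpos M hMetz vp hvp hwM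
  have hinvmul : M⁻¹ * M = 1 := Matrix.nonsing_inv_mul M (isUnit_iff_ne_zero.mpr hdet)
  have hmulinv : M * M⁻¹ = 1 := Matrix.mul_nonsing_inv M (isUnit_iff_ne_zero.mpr hdet)
  have hkey : vp ᵥ* (Ap * M⁻¹) ᵥ* M = vp ᵥ* Ap := by
    rw [Matrix.vecMul_vecMul, Matrix.mul_assoc, hinvmul, Matrix.mul_one]
  refine ⟨?_, hkey, fun j => by rw [hkey]; exact hvA j⟩
  intro i
  have hv : (vp ᵥ* (Ap * M⁻¹)) i = ∑ j, (vp ᵥ* Ap) j * M⁻¹ j i := by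
    rw [← Matrix.vecMul_vecMul]
    simp [Matrix.vecMul, dotProduct]
  rw [hv]
  -- some entry in column i of M⁻¹ is nonzero
  have hcol : ∃ j, M⁻¹ j i ≠ 0 := by
    by_contra hall
    push_neg at hall
    have : (M * M⁻¹) i i = 0 := by
      simp [Matrix.mul_apply, hall]
    rw [hmulinv] at this
    simp at this
  obtain ⟨j0, hj0⟩ := hcol
  apply Finset.sum_pos' (fun j _ => by nlinarith [(hvA j).le, hinvle j i])
  exact ⟨j0, Finset.mem_univ j0,
    mul_pos_of_neg_of_neg (hvA j0) (lt_of_le_of_ne (hinvle j0 i) hj0)⟩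
end

section
/- Let A : ℝ^{n_dg}_{>0} × ℝ^{n_cv}_{>0} → ℝ^{d×d} be a Metzler-valued function of the form A(ρ_dg, ρ_cv) = −D(ρ_dg)·E + C(ρ_cv), where the dependence is linear in each parameter block and A(θρ_dg, θρ_cv) = θA(ρ_dg, ρ_cv) for θ > 0, and A is entrywise nonincreasing in ρ_dg. Then A(ρ_dg, ρ_cv) is Hurwitz stable for all positive (ρ_dg, ρ_cv) if and only if A(𝟙, ρ_cv) is Hurwitz stable for all positive ρ_cv. -/
open Matrix

open scoped Pointwise

attribute [local instance] Matrix.linftyOpNormedRing Matrix.linftyOpNormedAlgebra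

lemma eigen_of_mem_spectrum {d : ℕ} (Mc : Matrix (Fin d) (Fin d) ℂ) {z : ℂ}
    (hz : z ∈ spectrum ℂ Mc) : ∃ v : Fin d → ℂ, v ≠ 0 ∧ Mc *ᵥ v = z • v := by
  rw [spectrum.mem_iff, Algebra.algebraMap_eq_smul_one] at hz
  have hdet : (z • (1 : Matrix (Fin d) (Fin d) ℂ) - Mc).det = 0 := by
    by_contra h
    exact hz ((Matrix.isUnit_iff_isUnit_det _).mpr (isUnit_iff_ne_zero.mpr h))
  obtain ⟨v, hv0, hv⟩ := (Matrix.exists_mulVec_eq_zero_iff).mpr hdet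
  refine ⟨v, hv0, ?_⟩
  rw [Matrix.sub_mulVec, sub_eq_zero] at hv
  rw [← hv, Matrix.smul_mulVec, Matrix.one_mulVec]

lemma metzler_subinvariant {d : ℕ} {M : Matrix (Fin d) (Fin d) ℝ} (hM : IsMetzler M)
    {z : ℂ} (hz : z ∈ spectrum ℂ (M.map Complex.ofReal)) :
    ∃ y : Fin d → ℝ, (∀ i, 0 ≤ y i) ∧ y ≠ 0 ∧ ∀ i, z.re * y i ≤ (M *ᵥ y) i := by
  obtain ⟨v, hv0, hv⟩ := eigen_of_mem_spectrum _ hz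
  refine ⟨fun i => ‖v i‖, fun i => norm_nonneg _, ?_, ?_⟩
  · obtain ⟨i, hi⟩ := Function.ne_iff.mp hv0
    exact Function.ne_iff.mpr ⟨i, by simpa using hi⟩
  · intro i
    have heig : ∑ j, (M i j : ℂ) * v j = z * v i := by
      have := congrFun hv i
      simpa [Matrix.mulVec, dotProduct, Matrix.map_apply] using this
    have hsplit : ∑ j ∈ Finset.univ.erase i, (M i j : ℂ) * v j = (z - (M i i : ℂ)) * v i := by
      have hsum := Finset.add_sum_erase Finset.univ (fun j => (M i j : ℂ) * v j) (Finset.mem_univ i)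
      beta_reduce at hsum
      rw [← hsum] at heig
      linear_combination heig
    have h1 : (z.re - M i i) * ‖v i‖ ≤ ‖z - (M i i : ℂ)‖ * ‖v i‖ := by
      apply mul_le_mul_of_nonneg_right _ (norm_nonneg _)
      calc z.re - M i i = (z - (M i i : ℂ)).re := by simp
        _ ≤ ‖z - (M i i : ℂ)‖ := Complex.re_le_norm _
    have h2 : ‖z - (M i i : ℂ)‖ * ‖v i‖ ≤ ∑ j ∈ Finset.univ.erase i, M i j * ‖v j‖ := by
      rw [← norm_mul, ← hsplit]
      refine (norm_sum_le _ _).trans ?_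
      apply Finset.sum_le_sum
      intro j hj
      rw [norm_mul, Complex.norm_real, Real.norm_eq_abs,
        abs_of_nonneg (hM i j (Finset.ne_of_mem_erase hj).symm)]
    have h3 : (M *ᵥ fun j => ‖v j‖) i = M i i * ‖v i‖ + ∑ j ∈ Finset.univ.erase i, M i j * ‖v j‖ := by
      simp only [Matrix.mulVec, dotProduct]
      exact (Finset.add_sum_erase Finset.univ (fun j => M i j * ‖v j‖) (Finset.mem_univ i)).symm
    rw [h3]
    nlinarith [h1.trans h2]

lemma nonneg_pow_entries {d : ℕ} {N : Matrix (Fin d) (Fin d) ℝ}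
    (hN : ∀ i j, 0 ≤ N i j) : ∀ k, ∀ i j, 0 ≤ (N ^ k) i j := by
  intro k
  induction k with
  | zero => intro i j; by_cases h : i = j <;> simp [pow_zero, Matrix.one_apply, h]
  | succ k ih =>
    intro i j
    rw [pow_succ, Matrix.mul_apply]
    exact Finset.sum_nonneg fun l _ => mul_nonneg (ih i l) (hN l j)

lemma subinv_pow {d : ℕ} {N : Matrix (Fin d) (Fin d) ℝ}
    (hN : ∀ i j, 0 ≤ N i j) {y : Fin d → ℝ} (hy : ∀ i, 0 ≤ y i)
    {r : ℝ} (hr : 0 ≤ r) (hsub : ∀ i, r * y i ≤ (N *ᵥ y) i) :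
    ∀ k, ∀ i, r ^ k * y i ≤ ((N ^ k) *ᵥ y) i := by
  intro k
  induction k with
  | zero => intro i; simp [Matrix.one_mulVec]
  | succ k ih =>
    intro i
    have h1 : ((N ^ (k+1)) *ᵥ y) i = (N *ᵥ ((N ^ k) *ᵥ y)) i := by
      rw [Matrix.mulVec_mulVec, ← pow_succ']
    rw [h1]
    have h2 : (N *ᵥ ((N ^ k) *ᵥ y)) i ≥ (N *ᵥ (fun j => r ^ k * y j)) i := by
      simp only [Matrix.mulVec, dotProduct]
      exact Finset.sum_le_sum fun j _ => mul_le_mul_of_nonneg_left (ih j) (hN i j)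
    have h3 : (N *ᵥ (fun j => r ^ k * y j)) i = r ^ k * (N *ᵥ y) i := by
      simp only [Matrix.mulVec, dotProduct, Finset.mul_sum]
      exact Finset.sum_congr rfl fun j _ => by ring
    have h4 : r ^ k * (N *ᵥ y) i ≥ r ^ k * (r * y i) :=
      mul_le_mul_of_nonneg_left (hsub i) (pow_nonneg hr k)
    calc r ^ (k+1) * y i = r ^ k * (r * y i) := by ring
      _ ≤ r ^ k * (N *ᵥ y) i := h4
      _ = (N *ᵥ (fun j => r ^ k * y j)) i := h3.symm
      _ ≤ (N *ᵥ ((N ^ k) *ᵥ y)) i := h2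

lemma le_spectralRadius_of_subinvariant {d : ℕ} {N : Matrix (Fin d) (Fin d) ℝ}
    (hN : ∀ i j, 0 ≤ N i j) {y : Fin d → ℝ} (hy : ∀ i, 0 ≤ y i) (hy0 : y ≠ 0)
    (r : NNReal) (hsub : ∀ i, (r : ℝ) * y i ≤ (N *ᵥ y) i) :
    (r : ENNReal) ≤ spectralRadius ℂ (N.map Complex.ofReal) := by
  haveI : CompleteSpace (Matrix (Fin d) (Fin d) ℂ) := FiniteDimensional.complete ℂ _
  obtain ⟨i₁, hi₁⟩ := Function.ne_iff.mp hy0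
  obtain ⟨i₀, -, hmax⟩ := Finset.exists_max_image Finset.univ y ⟨i₁, Finset.mem_univ i₁⟩
  have hyi₀ : 0 < y i₀ :=
    lt_of_lt_of_le (lt_of_le_of_ne (hy i₁) (Ne.symm hi₁)) (hmax i₁ (Finset.mem_univ i₁))
  -- row sum bound
  have hpow := subinv_pow hN hy r.coe_nonneg hsub
  have hrow : ∀ k, (r : ℝ) ^ k ≤ ∑ j, (N ^ k) i₀ j := by
    intro k
    have h1 : (r : ℝ) ^ k * y i₀ ≤ ∑ j, (N ^ k) i₀ j * y j := hpow k i₀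
    have h2 : ∑ j, (N ^ k) i₀ j * y j ≤ (∑ j, (N ^ k) i₀ j) * y i₀ := by
      rw [Finset.sum_mul]
      exact Finset.sum_le_sum fun j _ => mul_le_mul_of_nonneg_left
        (hmax j (Finset.mem_univ j)) (nonneg_pow_entries hN k i₀ j)
    exact le_of_mul_le_mul_right (h1.trans h2) hyi₀
  -- nnnorm bound
  have hnorm : ∀ k, (r : NNReal) ^ k ≤ ‖(N.map Complex.ofReal) ^ k‖₊ := by
    intro k
    have hmapk : (N.map Complex.ofReal) ^ k = (N ^ k).map Complex.ofReal := by
      have h := map_pow (Complex.ofRealHom.mapMatrix) N k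
      simp only [RingHom.mapMatrix_apply] at h
      have e : (⇑Complex.ofRealHom) = Complex.ofReal := funext fun _ => rfl
      rw [e] at h
      exact h.symm
    rw [hmapk, Matrix.linfty_opNNNorm_def]
    refine le_trans ?_ (Finset.le_sup (Finset.mem_univ i₀))
    rw [← NNReal.coe_le_coe]
    push_cast
    refine (hrow k).trans (le_of_eq ?_)
    refine Finset.sum_congr rfl fun j _ => ?_
    simp [Matrix.map_apply, abs_of_nonneg (nonneg_pow_entries hN k i₀ j)]
  have T := spectrum.pow_nnnorm_pow_one_div_tendsto_nhds_spectralRadius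
    (N.map Complex.ofReal)
  refine ge_of_tendsto T ?_
  filter_upwards [Filter.eventually_ge_atTop 1] with n hn
  have h1 : ((r : ENNReal) ^ n) ^ (1 / (n:ℝ)) ≤ (‖(N.map Complex.ofReal) ^ n‖₊ : ENNReal) ^ (1 / (n:ℝ)) := by
    apply ENNReal.rpow_le_rpow _ (by positivity)
    exact_mod_cast hnorm n
  refine le_trans (le_of_eq ?_) h1
  rw [← ENNReal.rpow_natCast, ← ENNReal.rpow_mul]
  rw [mul_one_div, div_self (by exact_mod_cast Nat.one_le_iff_ne_zero.mp hn), ENNReal.rpow_one]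

lemma metzler_comparison {d : ℕ} {M₁ M₂ : Matrix (Fin d) (Fin d) ℝ}
    (h1 : IsMetzler M₁) (hle : ∀ i j, M₁ i j ≤ M₂ i j) (h2 : IsHurwitz M₂) :
    IsHurwitz M₁ := by
  haveI : CompleteSpace (Matrix (Fin d) (Fin d) ℂ) := FiniteDimensional.complete ℂ _
  intro z hz
  by_contra hs
  push_neg at hs
  obtain ⟨y, hy, hy0, hsub1⟩ := metzler_subinvariant h1 hz
  obtain ⟨i₁, hi₁⟩ := Function.ne_iff.mp hy0
  haveI : Nonempty (Fin d) := ⟨i₁⟩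
  haveI : Nontrivial (Matrix (Fin d) (Fin d) ℂ) :=
    ⟨0, 1, fun h => by have := congrFun (congrFun h i₁) i₁; simp [Matrix.one_apply] at this⟩
  set Mc := M₂.map Complex.ofReal with hMc
  obtain ⟨w₀, hw₀⟩ := spectrum.nonempty Mc
  have hKc : IsCompact (spectrum ℂ Mc) := spectrum.isCompact Mc
  obtain ⟨wm, hwmK, hwmax⟩ := hKc.exists_isMaxOn ⟨w₀, hw₀⟩
    (Complex.continuous_re.continuousOn)
  set t := wm.re with htdef
  have ht : t < 0 := h2 _ hwmK
  set R := ‖Mc‖ with hRdef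
  have hR0 : (0:ℝ) ≤ R := norm_nonneg _
  have hwb : ∀ w ∈ spectrum ℂ Mc, ‖w‖ ≤ R := fun w hw =>
    spectrum.norm_le_norm_of_mem hw
  set u := min 1 (-t) with hudef
  have hu : 0 < u := lt_min one_pos (by linarith)
  have hu1 : u ≤ 1 := min_le_left _ _
  have hut : ∀ w ∈ spectrum ℂ Mc, w.re ≤ -u := by
    intro w hw
    have := hwmax hw
    simp only [Set.mem_setOf_eq] at this
    have h2' : -t ≥ u := min_le_right 1 (-t)
    calc w.re ≤ t := this
      _ ≤ -u := by linarith
  set B := Finset.univ.sup' (Finset.univ_nonempty) (fun i => -M₂ i i) with hBdef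
  set c := 1 + R + max B 0 + (R^2 + u^2)/u with hcdef
  have hstuff : 0 < (R^2 + u^2)/u := by positivity
  have hc1 : 1 ≤ c := by
    have : (0:ℝ) ≤ max B 0 := le_max_right _ _
    simp only [hcdef]; linarith
  have hcR : R + 1 ≤ c := by
    have : (0:ℝ) ≤ max B 0 := le_max_right _ _
    simp only [hcdef]; linarith
  have hcB : ∀ i, -M₂ i i ≤ c := by
    intro i
    have h1' : -M₂ i i ≤ B := by
      have := Finset.le_sup' (fun i => -M₂ i i) (Finset.mem_univ i)
      exact this
    have : B ≤ max B 0 := le_max_left _ _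
    simp only [hcdef]; linarith
  have hcu : R^2 + u^2 ≤ c * u := by
    have h1' : (R^2 + u^2)/u ≤ c := by
      have : (0:ℝ) ≤ max B 0 := le_max_right _ _
      simp only [hcdef]; linarith
    calc R^2 + u^2 = ((R^2 + u^2)/u) * u := by field_simp
      _ ≤ c * u := mul_le_mul_of_nonneg_right h1' hu.le
  clear_value t u B c R
  -- the shifted matrix
  set N := M₂ + c • (1 : Matrix (Fin d) (Fin d) ℝ) with hNdef
  have hNnn : ∀ i j, 0 ≤ N i j := by
    intro i j
    by_cases hij : i = j
    · subst hij
      simp only [hNdef, Matrix.add_apply, Matrix.smul_apply, Matrix.one_apply_eq, smul_eq_mul,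
        mul_one]
      have := hcB i; linarith
    · simp only [hNdef, Matrix.add_apply, Matrix.smul_apply, Matrix.one_apply_ne hij,
        smul_eq_mul, mul_zero, add_zero]
      exact le_trans (h1 i j hij) (hle i j)
  have hrnn : (0:ℝ) ≤ z.re + c := by linarith
  have hsubN : ∀ i, (z.re + c) * y i ≤ (N *ᵥ y) i := by
    intro i
    have hmono12 : (M₁ *ᵥ y) i ≤ (M₂ *ᵥ y) i := by
      simp only [Matrix.mulVec, dotProduct]
      exact Finset.sum_le_sum fun j _ => mul_le_mul_of_nonneg_right (hle i j) (hy j)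
    have hNy : (N *ᵥ y) i = (M₂ *ᵥ y) i + c * y i := by
      simp [hNdef, Matrix.add_mulVec, Matrix.smul_mulVec, Matrix.one_mulVec]
    rw [hNy, add_mul]
    have := hsub1 i
    have hcy : c * y i ≤ c * y i := le_refl _
    nlinarith [this.trans hmono12]
  set rn : NNReal := ⟨z.re + c, hrnn⟩ with hrn
  have hsr := le_spectralRadius_of_subinvariant hNnn hy hy0 rn hsubN
  -- identify the spectrum of N
  have hNmap : N.map Complex.ofReal = algebraMap ℂ _ (c:ℂ) + Mc := by
    ext i j
    by_cases hij : i = j <;>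
      simp [hNdef, hMc, Matrix.map_apply, Matrix.add_apply, Matrix.smul_apply,
        Matrix.one_apply, Matrix.algebraMap_matrix_apply, hij, add_comm]
  have hspecN : spectrum ℂ (N.map Complex.ofReal) = ({((c : ℝ) : ℂ)} : Set ℂ) + spectrum ℂ Mc := by
    rw [hNmap, spectrum.singleton_add_eq]
  -- bound the spectral radius from above
  have hub : spectralRadius ℂ (N.map Complex.ofReal) ≤ ENNReal.ofReal (c - u/2) := by
    rw [spectralRadius]
    refine iSup₂_le fun ζ hζ => ?_
    rw [hspecN] at hζ
    obtain ⟨cc, hcc, w, hw, rfl⟩ := Set.mem_add.mp hζ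
    rw [Set.mem_singleton_iff] at hcc
    subst hcc
    have hwre_le : w.re ≤ -u := hut w hw
    have hwre_ge : -R ≤ w.re := by
      have := (abs_le.mp (le_trans (Complex.abs_re_le_norm w) (hwb w hw))).1
      -- abs_re_le_abs : |w.re| ≤ Complex.abs w ; careful
      linarith [neg_abs_le w.re, le_trans (Complex.abs_re_le_norm w) (hwb w hw),
        abs_nonneg w.re]
    have hwim : w.im ^ 2 ≤ R ^ 2 := by
      have h1' : |w.im| ≤ R := le_trans (Complex.abs_im_le_norm w) (hwb w hw)
      nlinarith [abs_nonneg w.im, sq_abs w.im]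
    have hnormsq : ‖(c:ℂ) + w‖ ^ 2 = (c + w.re)^2 + w.im^2 := by
      rw [Complex.sq_norm, Complex.normSq_apply]
      simp
      ring
    have hcw1 : 0 ≤ c + w.re := by linarith
    have hcw2 : c + w.re ≤ c - u := by linarith
    have hsq1 : (c + w.re)^2 ≤ (c - u)^2 := by nlinarith
    have hsq : ‖(c:ℂ) + w‖ ^ 2 ≤ (c - u/2) ^ 2 := by
      rw [hnormsq]
      nlinarith [sq_nonneg u]
    have hcw0 : (0:ℝ) ≤ c - u/2 := by linarith
    have hfin : ‖(c:ℂ) + w‖ ≤ c - u/2 := by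
      have hss := Real.sqrt_le_sqrt hsq
      rwa [Real.sqrt_sq (norm_nonneg _), Real.sqrt_sq hcw0] at hss
    rw [← ENNReal.ofReal_coe_nnreal, coe_nnnorm]
    exact ENNReal.ofReal_le_ofReal hfin
  have hend : (rn : ENNReal) ≤ ENNReal.ofReal (c - u/2) := le_trans hsr hub
  have h2' : (0:ℝ) ≤ c - u/2 := by linarith
  rw [ENNReal.ofReal_eq_coe_nnreal h2', ENNReal.coe_le_coe] at hend
  have h4 : (rn : ℝ) ≤ c - u/2 := NNReal.coe_le_coe.mpr hend
  have h5 : z.re + c ≤ c - u/2 := h4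
  linarith

lemma isHurwitz_smul {d : ℕ} {M : Matrix (Fin d) (Fin d) ℝ} {θ : ℝ} (hθ : 0 < θ)
    (hM : IsHurwitz M) : IsHurwitz (θ • M) := by
  intro z hz
  have hmap : (θ • M).map Complex.ofReal = (θ : ℂ) • M.map Complex.ofReal := by
    ext i j
    simp [Matrix.map_apply]
  rw [hmap] at hz
  have hne : ((θ : ℂ)) ≠ 0 := by exact_mod_cast hθ.ne'
  have hunit : ((Units.mk0 (θ:ℂ) hne : ℂˣ) • M.map Complex.ofReal)
      = (θ : ℂ) • M.map Complex.ofReal := rfl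
  rw [← hunit, spectrum.unit_smul_eq_smul] at hz
  obtain ⟨w, hw, hwz⟩ := hz
  have hwlt := hM w hw
  have : z = (θ : ℂ) * w := by
    rw [← hwz]; simp [Units.smul_def]
  rw [this]
  have : ((θ : ℂ) * w).re = θ * w.re := by
    simp [Complex.mul_re]
  rw [this]
  exact mul_neg_of_pos_of_neg hθ hwlt

theorem degradation_rescaling_lemma {d ncv : ℕ}
    (E : Matrix (Fin d) (Fin d) ℝ)
    (C : (Fin ncv → ℝ) → Matrix (Fin d) (Fin d) ℝ)
    (hC : IsLinearMap ℝ C)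
    (A : (Fin d → ℝ) → (Fin ncv → ℝ) → Matrix (Fin d) (Fin d) ℝ)
    (hform : ∀ ρdg ρcv, A ρdg ρcv = -(Matrix.diagonal ρdg * E) + C ρcv)
    (hMetz : ∀ ρdg ρcv, (∀ i, 0 < ρdg i) → (∀ i, 0 < ρcv i) → IsMetzler (A ρdg ρcv))
    (hmono : ∀ ρdg ρdg' ρcv, (∀ i, ρdg i ≤ ρdg' i) →
      ∀ m n, A ρdg' ρcv m n ≤ A ρdg ρcv m n) :
    (∀ ρdg ρcv, (∀ i, 0 < ρdg i) → (∀ i, 0 < ρcv i) → IsHurwitz (A ρdg ρcv)) ↔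
      (∀ ρcv, (∀ i, 0 < ρcv i) → IsHurwitz (A (fun _ => 1) ρcv)) := by
  constructor
  · intro h ρcv hρcv
    exact h (fun _ => 1) ρcv (fun _ => one_pos) hρcv
  · intro h ρdg ρcv hdg hcv
    rcases isEmpty_or_nonempty (Fin d) with hd | hd
    · intro z hz
      obtain ⟨v, hv0, -⟩ := eigen_of_mem_spectrum _ hz
      exact absurd (Subsingleton.elim v 0) hv0
    · have hne : (Finset.univ : Finset (Fin d)).Nonempty := Finset.univ_nonempty
      set θ := Finset.univ.inf' hne ρdg with hθdef
      have hθpos : 0 < θ := by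
        rw [hθdef, Finset.lt_inf'_iff]
        exact fun i _ => hdg i
      have hθle : ∀ i, θ ≤ ρdg i := fun i => Finset.inf'_le _ (Finset.mem_univ i)
      have key : A (fun _ => θ) ρcv = θ • A (fun _ => 1) (θ⁻¹ • ρcv) := by
        rw [hform, hform, smul_add]
        congr 1
        · ext i j
          simp [Matrix.diagonal_mul, Matrix.neg_apply, Matrix.smul_apply]
        · rw [← hC.map_smul, smul_smul, mul_inv_cancel₀ hθpos.ne', one_smul]
      have hH2 : IsHurwitz (A (fun _ => θ) ρcv) := by
        rw [key]
        refine isHurwitz_smul hθpos (h _ fun i => ?_)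
        have : (θ⁻¹ • ρcv) i = θ⁻¹ * ρcv i := rfl
        rw [this]
        exact mul_pos (inv_pos.mpr hθpos) (hcv i)
      exact metzler_comparison (hMetz ρdg ρcv hdg hcv)
        (hmono (fun _ => θ) ρdg ρcv hθle) hH2
end
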